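/- arXiv:1502.02691 — 3 statements merged into one kernel-verified Lean document; each statement's English description precedes it below -/
import Mathlib

section
/- Let X be a Peano continuum, φ a regular expansive flow on X with a fixed family H_ε of cross sections as described, and let δ ∈ (0,r] be an expansive constant, meaning W^s_δ(x) ∩ W^u_δ(x) = {x} for all x ∈ X. Then for every x ∈ X, diam(Φ_t(x, W^s_δ(x))) → 0 as t → +∞. -/
open Set Metric Filter Topology

universe u

def IsFlow {X : Type u} [TopologicalSpace X] (φ : ℝ → X → X) : Prop :=
  Continuous (fun p : ℝ × X => φ p.1 p.2) ∧ (∀ x, φ 0 x = x) ∧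
    ∀ (s t : ℝ) (x : X), φ (s + t) x = φ s (φ t x)

def IsRegularFlow {X : Type u} [TopologicalSpace X] (φ : ℝ → X → X) : Prop :=
  IsFlow φ ∧ ∀ x : X, ∃ t : ℝ, φ t x ≠ x

/-- `B_r(K)`, the closed `r`-neighborhood of a set `K`. -/
def ballSet {X : Type u} [PseudoMetricSpace X] (r : ℝ) (K : Set X) : Set X :=
  ⋃ z ∈ K, closedBall z r

/-- A field of compact sets: compact values, `x ∈ h x`, and semicontinuity. -/
def IsFieldOfCompactSets {X : Type u} [MetricSpace X] (h : X → Set X) : Prop :=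
  (∀ x : X, IsCompact (h x)) ∧ (∀ x : X, x ∈ h x) ∧
    ∀ x : X, ∀ ε > (0 : ℝ), ∃ δ > (0 : ℝ), ∀ y : X, dist x y < δ → h y ⊆ ballSet ε (h x)

def IsFieldOfNbhds {X : Type u} [MetricSpace X] (N : X → Set X) : Prop :=
  IsFieldOfCompactSets N ∧ ∃ r > (0 : ℝ), ∀ x : X, closedBall x r ⊆ N x

/-- `φ_I(h)`, the saturation of a field `h` by flow-times in `I`. -/
def flowSat {X : Type u} [TopologicalSpace X] (φ : ℝ → X → X) (I : Set ℝ) (h : X → Set X) :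
    X → Set X :=
  fun x => {z | ∃ t ∈ I, ∃ y ∈ h x, z = φ t y}

def IsCrossSectionField {X : Type u} [MetricSpace X] (φ : ℝ → X → X) (H : X → Set X) : Prop :=
  IsFieldOfCompactSets H ∧ ∃ τ > (0 : ℝ),
    IsFieldOfNbhds (flowSat φ (Icc (-τ) τ) H) ∧
    ∀ x : X, ∀ y ∈ H x, H x ∩ {z | ∃ t : ℝ, |t| ≤ τ ∧ z = φ t y} = {y}

def IsMonotonousField {X : Type u} [MetricSpace X] (φ : ℝ → X → X) (H : X → Set X) : Prop :=
  ∃ ε > (0 : ℝ), ∀ x : X, ∀ t ∈ Ioo (0 : ℝ) ε, H x ∩ H (φ t x) = ∅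

def fieldTranspose {X : Type u} (h : X → Set X) : X → Set X := fun x => {y | x ∈ h y}

def IsSymmetricField {X : Type u} (h : X → Set X) : Prop := fieldTranspose h = h

def IsLocallySymmetricField {X : Type u} [MetricSpace X] (h : X → Set X) : Prop :=
  ∃ δ > (0 : ℝ), IsSymmetricField (fun x => closedBall x δ ∩ h x)

/-- Continuity of a field with respect to the Hausdorff metric. -/
def IsContinuousField {X : Type u} [MetricSpace X] (h : X → Set X) : Prop :=
  ∀ x : X, ∀ ε > (0 : ℝ), ∃ δ > (0 : ℝ), ∀ y : X,
    dist x y < δ → hausdorffDist (h x) (h y) < ε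

def IsExpansiveFlow {X : Type u} [MetricSpace X] (φ : ℝ → X → X) : Prop :=
  ∀ ε > (0 : ℝ), ∃ δ > (0 : ℝ), ∀ x y : X, ∀ h : ℝ → ℝ,
    Continuous h → StrictMono h → Function.Surjective h → h 0 = 0 →
    (∀ t : ℝ, dist (φ (h t) y) (φ t x) < δ) → ∃ t ∈ Ioo (-ε) ε, y = φ t x

def IsPositiveExpansiveFlow {X : Type u} [MetricSpace X] (φ : ℝ → X → X) : Prop :=
  ∀ ε > (0 : ℝ), ∃ δ > (0 : ℝ), ∀ x y : X, ∀ h : ℝ → ℝ,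
    ContinuousOn h (Ici 0) → StrictMonoOn h (Ici 0) → h 0 = 0 →
    MapsTo h (Ici 0) (Ici 0) → SurjOn h (Ici 0) (Ici 0) →
    (∀ t ≥ (0 : ℝ), dist (φ (h t) y) (φ t x) < δ) → ∃ t ∈ Ioo (-ε) ε, y = φ t x

/-- A one-parameter family of cross sections as produced by Theorem `secContMonSym`
of the paper: jointly continuous (Hausdorff metric), with nonempty compact
connected values; each `H ε` (for `ε ∈ (0,r]`) is a continuous, monotonous,
locally symmetric field of cross sections; `H 0 x = {x}`; monotone in `ε`. -/
structure CrossSectionFamily {X : Type u} [MetricSpace X] (φ : ℝ → X → X) where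
  r : ℝ
  r_pos : 0 < r
  H : ℝ → X → Set X
  compact : ∀ ε ∈ Icc (0 : ℝ) r, ∀ x : X, IsCompact (H ε x)
  connected : ∀ ε ∈ Icc (0 : ℝ) r, ∀ x : X, IsConnected (H ε x)
  jointCont : ∀ ε ∈ Icc (0 : ℝ) r, ∀ x : X, ∀ η > (0 : ℝ), ∃ δ > (0 : ℝ),
    ∀ ε' ∈ Icc (0 : ℝ) r, ∀ y : X, |ε - ε'| < δ → dist x y < δ →
      hausdorffDist (H ε x) (H ε' y) < η
  cross : ∀ ε ∈ Ioc (0 : ℝ) r, IsCrossSectionField φ (H ε)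
  monot : ∀ ε ∈ Ioc (0 : ℝ) r, IsMonotonousField φ (H ε)
  contField : ∀ ε ∈ Ioc (0 : ℝ) r, IsContinuousField (H ε)
  locSym : ∀ ε ∈ Ioc (0 : ℝ) r, IsLocallySymmetricField (H ε)
  zero : ∀ x : X, H 0 x = {x}
  mono : ∀ ε ε' : ℝ, 0 ≤ ε → ε ≤ ε' → ε' ≤ r → ∀ x : X, H ε x ⊆ H ε' x

/-- The stable set `W^s` of `x` relative to a field of cross sections `Hε`. -/
def Wstable {X : Type u} [MetricSpace X] (φ : ℝ → X → X) (Hε : X → Set X) (x : X) : Set X :=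
  {y | ∃ h : ℝ → ℝ, ContinuousOn h (Ici 0) ∧ StrictMonoOn h (Ici 0) ∧ h 0 = 0 ∧
    MapsTo h (Ici 0) (Ici 0) ∧ SurjOn h (Ici 0) (Ici 0) ∧
    ∀ t ≥ (0 : ℝ), φ (h t) y ∈ Hε (φ t x)}

/-- The unstable set `W^u` of `x` relative to a field of cross sections `Hε`. -/
def Wunstable {X : Type u} [MetricSpace X] (φ : ℝ → X → X) (Hε : X → Set X) (x : X) : Set X :=
  {y | ∃ h : ℝ → ℝ, ContinuousOn h (Iic 0) ∧ StrictMonoOn h (Iic 0) ∧ h 0 = 0 ∧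
    MapsTo h (Iic 0) (Iic 0) ∧ SurjOn h (Iic 0) (Iic 0) ∧
    ∀ t ≤ (0 : ℝ), φ (h t) y ∈ Hε (φ t x)}

def IsStablePoint {X : Type u} [MetricSpace X] (φ : ℝ → X → X) (F : CrossSectionFamily φ)
    (x : X) : Prop :=
  ∀ ε ∈ Ioc (0 : ℝ) F.r, ∃ δ ∈ Ioc (0 : ℝ) F.r, F.H δ x ⊆ Wstable φ (F.H ε) x

/-- `Φ_t(x,S)`: the image of `S` under the sectional flow over `x` at time `t ≥ 0`. -/
def secImage {X : Type u} [MetricSpace X] (φ : ℝ → X → X) (Hd : X → Set X) (x : X)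
    (S : Set X) (t : ℝ) : Set X :=
  {z | ∃ y ∈ S, ∃ g : ℝ → ℝ, ContinuousOn g (Ici 0) ∧ g 0 = 0 ∧
    (∀ s ≥ (0 : ℝ), φ (g s) y ∈ Hd (φ s x)) ∧ z = φ (g t) y}

/-- `Φ_t(x,C)` for the sectional flow defined on the time interval `[0,s]`. -/
def secImageOn {X : Type u} [MetricSpace X] (φ : ℝ → X → X) (Hd : X → Set X) (x : X)
    (C : Set X) (s t : ℝ) : Set X :=
  {z | ∃ y ∈ C, ∃ g : ℝ → ℝ, ContinuousOn g (Icc 0 s) ∧ g 0 = 0 ∧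
    (∀ u ∈ Icc (0 : ℝ) s, φ (g u) y ∈ Hd (φ u x)) ∧ z = φ (g t) y}

def IsOneParamNbhdField {X : Type u} [MetricSpace X] (N : ℝ → X → Set X) : Prop :=
  (∀ p ∈ Icc (0 : ℝ) 1, ∀ x : X, IsCompact (N p x) ∧ (N p x).Nonempty) ∧
  (∀ p ∈ Icc (0 : ℝ) 1, ∀ x : X, ∀ η > (0 : ℝ), ∃ δ > (0 : ℝ), ∀ q ∈ Icc (0 : ℝ) 1, ∀ y : X,
      |p - q| < δ → dist x y < δ → hausdorffDist (N p x) (N q y) < η) ∧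
  (∀ p ∈ Ioc (0 : ℝ) 1, IsFieldOfNbhds (N p)) ∧
  (∀ x : X, N 0 x = {x}) ∧ (∀ x : X, N 1 x = univ)

/-- `ℤ`-iterates of a homeomorphism. -/
def homeoIter {X : Type u} [TopologicalSpace X] (f : X ≃ₜ X) : ℤ → X → X
  | Int.ofNat n => (⇑f)^[n]
  | Int.negSucc n => (⇑f.symm)^[n + 1]

def IsExpansiveHomeo {X : Type u} [MetricSpace X] (f : X ≃ₜ X) : Prop :=
  ∃ c > (0 : ℝ), ∀ x y : X, (∀ n : ℤ, dist (homeoIter f n x) (homeoIter f n y) ≤ c) → x = y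


set_option linter.unusedSectionVars false

section Aux

variable {X : Type u} [MetricSpace X] {φ : ℝ → X → X}

theorem aux_cphi (hc : Continuous fun p : ℝ × X => φ p.1 p.2) (t : ℝ) :
    Continuous fun z : X => φ t z :=
  hc.comp (continuous_const.prodMk continuous_id)

theorem aux_smalltime [CompactSpace X] (hc : Continuous fun p : ℝ × X => φ p.1 p.2)
    (h0 : ∀ x, φ 0 x = x) :
    ∀ c > (0 : ℝ), ∃ η > (0 : ℝ), ∀ r : ℝ, |r| ≤ η → ∀ v : X, dist (φ r v) v ≤ c := by
  intro c hcpos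
  by_contra hcon
  push_neg at hcon
  have key : ∀ n : ℕ, ∃ r : ℝ, |r| ≤ 1 / (n + 1) ∧ ∃ v : X, c < dist (φ r v) v := by
    intro n
    obtain ⟨r, hr, v, hv⟩ := hcon (1 / (n + 1)) (by positivity)
    exact ⟨r, hr, v, hv⟩
  choose r hr v hv using key
  obtain ⟨v', ψ, hψ, hlim⟩ := CompactSpace.tendsto_subseq v
  have habs : Tendsto (fun j => |r (ψ j)|) atTop (𝓝 0) :=
    squeeze_zero (fun j => abs_nonneg _) (fun j => hr (ψ j))
      (tendsto_one_div_add_atTop_nhds_zero_nat.comp hψ.tendsto_atTop)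
  have hrlim : Tendsto (fun j => r (ψ j)) atTop (𝓝 0) :=
    (tendsto_zero_iff_abs_tendsto_zero _).2 habs
  have hpair : Tendsto (fun j => ((r (ψ j)), v (ψ j))) atTop (𝓝 ((0 : ℝ), v')) :=
    hrlim.prodMk_nhds hlim
  have hdist : Tendsto (fun j => dist (φ (r (ψ j)) (v (ψ j))) (v (ψ j))) atTop
      (𝓝 (dist (φ 0 v') v')) := by
    have hd : Continuous fun p : ℝ × X => dist (φ p.1 p.2) p.2 := hc.dist continuous_snd
    exact (hd.tendsto _).comp hpair
  rw [h0, dist_self] at hdist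
  have : c ≤ 0 := ge_of_tendsto hdist (Eventually.of_forall fun j => (hv (ψ j)).le)
  linarith

omit [MetricSpace X] in
theorem aux_iter [TopologicalSpace X] (h0 : ∀ x : X, φ 0 x = x)
    (hadd : ∀ s t x, φ (s + t) x = φ s (φ t x))
    {z : X} {d : ℝ} (hz : φ d z = z) : ∀ m : ℕ, φ (m * d) z = z := by
  intro m
  induction m with
  | zero => simpa using h0 z
  | succ k ih =>
      have h1 : ((k : ℝ) + 1) * d = d + k * d := by ring
      rw [Nat.cast_succ, h1, hadd, ih, hz]

theorem aux_period [CompactSpace X] (hc : Continuous fun p : ℝ × X => φ p.1 p.2)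
    (h0 : ∀ x, φ 0 x = x) (hadd : ∀ s t x, φ (s + t) x = φ s (φ t x))
    (hreg : ∀ x : X, ∃ t : ℝ, φ t x ≠ x) :
    ∃ T > (0 : ℝ), ∀ (z : X) (d : ℝ), φ d z = z → d = 0 ∨ T ≤ |d| := by
  by_contra hcon
  push_neg at hcon
  have key : ∀ n : ℕ, ∃ (z : X) (d : ℝ), φ d z = z ∧ 0 < d ∧ d < 1 / (n + 1) := by
    intro n
    obtain ⟨z, d, hzd, hd0, hdlt⟩ := hcon (1 / (n + 1)) (by positivity)
    rcases lt_or_gt_of_ne hd0 with h | h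
    · refine ⟨z, -d, ?_, by linarith, by rwa [abs_of_neg h] at hdlt⟩
      have h2 : φ (-d) (φ d z) = φ 0 z := by rw [← hadd]; norm_num
      rw [hzd] at h2; rw [h2, h0]
    · exact ⟨z, d, hzd, h, by rwa [abs_of_pos h] at hdlt⟩
  choose z d hzd hd0 hdlt using key
  obtain ⟨z', ψ, hψ, hlim⟩ := CompactSpace.tendsto_subseq z
  have hfix : ∀ t : ℝ, 0 ≤ t → φ t z' = z' := by
    intro t ht
    have hrem : ∀ n, φ t (z n) = φ (d n * Int.fract (t / d n)) (z n) := by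
      intro n
      have hdn : (0 : ℝ) < d n := hd0 n
      have hfl : (0 : ℝ) ≤ t / d n := div_nonneg ht hdn.le
      have hmz : ((⌊t / d n⌋.toNat : ℕ) : ℝ) = ((⌊t / d n⌋ : ℤ) : ℝ) := by
        exact_mod_cast congrArg (fun k : ℤ => (k : ℝ))
          (Int.toNat_of_nonneg (Int.floor_nonneg.2 hfl))
      have hf : Int.fract (t / d n) = t / d n - ↑⌊t / d n⌋ := rfl
      have hne0 : d n ≠ 0 := hdn.ne'
      have ht' : t = d n * Int.fract (t / d n) + (⌊t / d n⌋.toNat : ℝ) * d n := by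
        rw [hf, hmz]; field_simp; ring
      nth_rewrite 1 [ht']
      rw [hadd, aux_iter h0 hadd (hzd n)]
    have hdz : ∀ c > (0 : ℝ), dist (φ t z') z' ≤ 3 * c := by
      intro c hcp
      obtain ⟨η, hη, hsm⟩ := aux_smalltime hc h0 c hcp
      have e1 : ∀ᶠ j in atTop, dist (φ t (z (ψ j))) (φ t z') < c := by
        have h5 := ((aux_cphi hc t).tendsto z').comp hlim
        exact (Metric.tendsto_nhds.1 h5) c hcp
      have e2 : ∀ᶠ j in atTop, dist (z (ψ j)) z' < c :=
        (Metric.tendsto_nhds.1 hlim) c hcp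
      have e3 : ∀ᶠ j in atTop, d (ψ j) ≤ η := by
        have h1 : Tendsto (fun j => d (ψ j)) atTop (𝓝 0) :=
          squeeze_zero (fun j => (hd0 _).le) (fun j => (hdlt (ψ j)).le)
            (tendsto_one_div_add_atTop_nhds_zero_nat.comp hψ.tendsto_atTop)
        filter_upwards [(Metric.tendsto_nhds.1 h1) η hη] with j hj
        rw [Real.dist_eq, sub_zero, abs_of_pos (hd0 _)] at hj
        exact hj.le
      obtain ⟨j, h1, h2, h3⟩ := (e1.and (e2.and e3)).exists
      have hb2 : dist (φ t (z (ψ j))) (z (ψ j)) ≤ c := by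
        rw [hrem (ψ j)]
        apply hsm
        · rw [abs_of_nonneg (mul_nonneg (hd0 _).le (Int.fract_nonneg _))]
          calc d (ψ j) * Int.fract (t / d (ψ j)) ≤ d (ψ j) * 1 :=
                mul_le_mul_of_nonneg_left (Int.fract_lt_one _).le (hd0 _).le
            _ ≤ η := by rw [mul_one]; exact h3
      calc dist (φ t z') z' ≤ dist (φ t z') (φ t (z (ψ j))) + dist (φ t (z (ψ j))) (z (ψ j))
            + dist (z (ψ j)) z' := dist_triangle4 _ _ _ _
        _ ≤ c + c + c := add_le_add (add_le_add (by rw [dist_comm]; exact h1.le) hb2) h2.le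
        _ = 3 * c := by ring
    have hzero : dist (φ t z') z' = 0 := by
      by_contra hne
      have hpos : 0 < dist (φ t z') z' := lt_of_le_of_ne dist_nonneg (Ne.symm hne)
      have := hdz (dist (φ t z') z' / 4) (by linarith)
      linarith
    exact dist_eq_zero.1 hzero
  obtain ⟨t, htne⟩ := hreg z'
  rcases le_or_gt 0 t with h | h
  · exact htne (hfix t h)
  · apply htne
    have h1 : φ (-t) z' = z' := hfix (-t) (by linarith)
    calc φ t z' = φ t (φ (-t) z') := by rw [h1]
      _ = φ 0 z' := by rw [← hadd]; norm_num
      _ = z' := h0 z'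

theorem aux_memlim {Hd : X → Set X} (hcpt : ∀ x : X, IsCompact (Hd x))
    (hne : ∀ x : X, x ∈ Hd x)
    (hsc : ∀ x : X, ∀ ε > (0 : ℝ), ∃ δ > (0 : ℝ), ∀ y : X, dist x y < δ → Hd y ⊆ ballSet ε (Hd x))
    {zz w : X} (h : ∀ c > (0 : ℝ), ∃ z' w', dist zz z' ≤ c ∧ dist w w' ≤ c ∧ z' ∈ Hd w') :
    zz ∈ Hd w := by
  have key : ∀ ε > (0 : ℝ), infDist zz (Hd w) ≤ 2 * ε := by
    intro ε hε
    obtain ⟨δ, hδ, hδp⟩ := hsc w ε hε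
    obtain ⟨z', w', h1, h2, h3⟩ := h (min (δ / 2) ε) (by positivity)
    have hw' : dist w w' < δ := lt_of_le_of_lt (h2.trans (min_le_left _ _)) (by linarith)
    have h4 := hδp w' hw' h3
    rw [ballSet, mem_iUnion₂] at h4
    obtain ⟨uu, huu, hzu⟩ := h4
    rw [mem_closedBall] at hzu
    calc infDist zz (Hd w) ≤ dist zz uu := infDist_le_dist_of_mem huu
      _ ≤ dist zz z' + dist z' uu := dist_triangle _ _ _
      _ ≤ ε + ε := add_le_add (h1.trans (min_le_right _ _)) hzu
      _ = 2 * ε := by ring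
  have h0' : infDist zz (Hd w) = 0 := by
    by_contra hne'
    have hpos : 0 < infDist zz (Hd w) := lt_of_le_of_ne infDist_nonneg (Ne.symm hne')
    have := key (infDist zz (Hd w) / 4) (by linarith)
    linarith
  exact ((hcpt w).isClosed.mem_iff_infDist_zero ⟨w, hne w⟩).2 h0'


section Aux2

variable {X : Type u} [MetricSpace X] {φ : ℝ → X → X} {Hd : X → Set X} {τ T : ℝ}

theorem aux_sep (hadd : ∀ s t x, φ (s + t) x = φ s (φ t x))
    (hsec : ∀ x : X, ∀ y ∈ Hd x, Hd x ∩ {z | ∃ t : ℝ, |t| ≤ τ ∧ z = φ t y} = {y})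
    (hper : ∀ (z : X) (d : ℝ), φ d z = z → d = 0 ∨ T ≤ |d|)
    {a b : ℝ} {y x' : X} (ha : φ a y ∈ Hd x') (hb : φ b y ∈ Hd x')
    (hab : |a - b| < min τ T) : a = b := by
  have hw : φ a y = φ (a - b) (φ b y) := by rw [← hadd]; ring_nf
  have hmem : φ a y ∈ Hd x' ∩ {z | ∃ t : ℝ, |t| ≤ τ ∧ z = φ t (φ b y)} :=
    ⟨ha, ⟨a - b, (le_of_lt (lt_of_lt_of_le hab (min_le_left _ _))), hw⟩⟩
  rw [hsec x' (φ b y) hb] at hmem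
  have hfixed : φ (a - b) (φ b y) = φ b y := by rw [← hw, hmem]
  rcases hper (φ b y) (a - b) hfixed with h | h
  · linarith [sub_eq_zero.1 h]
  · have := lt_of_lt_of_le hab (min_le_right _ _)
    linarith

theorem aux_unique (hadd : ∀ s t x, φ (s + t) x = φ s (φ t x))
    (hsec : ∀ x : X, ∀ y ∈ Hd x, Hd x ∩ {z | ∃ t : ℝ, |t| ≤ τ ∧ z = φ t y} = {y})
    (hper : ∀ (z : X) (d : ℝ), φ d z = z → d = 0 ∨ T ≤ |d|)
    (hτ : 0 < τ) (hT : 0 < T)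
    {x y : X} {g1 g2 : ℝ → ℝ}
    (hg1c : ContinuousOn g1 (Ici 0)) (hg2c : ContinuousOn g2 (Ici 0))
    (hg10 : g1 0 = 0) (hg20 : g2 0 = 0)
    (htr1 : ∀ s ≥ (0 : ℝ), φ (g1 s) y ∈ Hd (φ s x))
    (htr2 : ∀ s ≥ (0 : ℝ), φ (g2 s) y ∈ Hd (φ s x)) :
    ∀ t ≥ (0 : ℝ), g1 t = g2 t := by
  intro t0 ht0
  set A : Set ℝ := {s | s ∈ Icc 0 t0 ∧ ∀ u ∈ Icc (0 : ℝ) s, g1 u = g2 u} with hA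
  have h0A : (0 : ℝ) ∈ A := by
    refine ⟨⟨le_refl 0, ht0⟩, fun u hu => ?_⟩
    have : u = 0 := le_antisymm hu.2 hu.1
    rw [this, hg10, hg20]
  have hbdd : BddAbove A := ⟨t0, fun s hs => hs.1.2⟩
  have hAne : A.Nonempty := ⟨0, h0A⟩
  set S := sSup A with hS
  have hS0 : 0 ≤ S := le_csSup hbdd h0A
  have hSt0 : S ≤ t0 := csSup_le hAne fun s hs => hs.1.2
  have key1 : ∀ u : ℝ, 0 ≤ u → u < S → g1 u = g2 u := by
    intro u hu huS
    obtain ⟨s, hsA, hus⟩ := exists_lt_of_lt_csSup hAne huS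
    exact hsA.2 u ⟨hu, hus.le⟩
  have key2 : g1 S = g2 S := by
    rcases eq_or_lt_of_le hS0 with h | h
    · rw [← h, hg10, hg20]
    · have hcl : S ∈ closure (Ico (0 : ℝ) S) := by
        rw [closure_Ico h.ne]; exact ⟨hS0, le_refl S⟩
      have hnb : (𝓝[Ico (0 : ℝ) S] S).NeBot := mem_closure_iff_nhdsWithin_neBot.1 hcl
      have hsub : Ico (0 : ℝ) S ⊆ Ici 0 := fun u hu => hu.1
      have t1 : Tendsto g1 (𝓝[Ico (0 : ℝ) S] S) (𝓝 (g1 S)) :=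
        (hg1c S hS0).mono_left (nhdsWithin_mono S hsub)
      have t2 : Tendsto g2 (𝓝[Ico (0 : ℝ) S] S) (𝓝 (g2 S)) :=
        (hg2c S hS0).mono_left (nhdsWithin_mono S hsub)
      have t1' : Tendsto g2 (𝓝[Ico (0 : ℝ) S] S) (𝓝 (g1 S)) := by
        refine t1.congr' ?_
        filter_upwards [self_mem_nhdsWithin] with u hu
        exact key1 u hu.1 hu.2
      exact tendsto_nhds_unique t1' t2
  have hSA : S ∈ A := by
    refine ⟨⟨hS0, hSt0⟩, fun u hu => ?_⟩
    rcases eq_or_lt_of_le hu.2 with h | h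
    · rw [h, key2]
    · exact key1 u hu.1 h
  have hfin : S = t0 := by
    by_contra hne
    have hlt : S < t0 := lt_of_le_of_ne hSt0 hne
    -- continuity of the difference at S within Ici 0
    have hcw : ContinuousWithinAt (fun u => g1 u - g2 u) (Ici 0) S :=
      ((hg1c S hS0).sub (hg2c S hS0))
    have hval : g1 S - g2 S = 0 := by rw [key2, sub_self]
    have hev : ∀ᶠ u in 𝓝[Ici 0] S, |g1 u - g2 u| < min τ T := by
      have := hcw.tendsto
      rw [hval] at this
      have h2 := (Metric.tendsto_nhds.1 this) (min τ T) (lt_min hτ hT)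
      filter_upwards [h2] with u hu
      rwa [Real.dist_eq, sub_zero] at hu
    rw [eventually_iff, mem_nhdsWithin_iff] at hev
    obtain ⟨ρ, hρ, hball⟩ := hev
    set s' := min t0 (S + ρ / 2) with hs'
    have hs'S : S < s' := lt_min hlt (by linarith)
    have hs'A : s' ∈ A := by
      refine ⟨⟨le_trans hS0 hs'S.le, min_le_left _ _⟩, fun u hu => ?_⟩
      rcases le_or_gt u S with h | h
      · exact hSA.2 u ⟨hu.1, h⟩
      · have hu0 : (0 : ℝ) ≤ u := hu.1
        have hub : u ∈ ball S ρ ∩ Ici 0 := by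
          constructor
          · rw [mem_ball, Real.dist_eq, abs_of_pos (by linarith : (0:ℝ) < u - S)]
            have : u ≤ S + ρ / 2 := le_trans hu.2 (min_le_right _ _)
            linarith
          · exact hu0
        have habs := hball hub
        exact aux_sep hadd hsec hper (htr1 u hu0) (htr2 u hu0) habs
    have := le_csSup hbdd hs'A
    linarith
  have h9 := hSA.2 t0
  rw [hfin] at h9
  exact h9 ⟨ht0, le_refl t0⟩
end Aux2
section Aux3

variable {X : Type u} [MetricSpace X] [CompactSpace X] {φ : ℝ → X → X} {Hd : X → Set X}
  {τ T e : ℝ} {x : X}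

/-- Uniform upper modulus for reparametrizations of trackings. -/
theorem aux_modA (hc : Continuous fun p : ℝ × X => φ p.1 p.2)
    (h0 : ∀ x, φ 0 x = x) (hadd : ∀ s t x, φ (s + t) x = φ s (φ t x))
    (hcpt : ∀ x : X, IsCompact (Hd x)) (hne : ∀ x : X, x ∈ Hd x)
    (hsc : ∀ x : X, ∀ ε > (0 : ℝ), ∃ δ > (0 : ℝ), ∀ y : X, dist x y < δ → Hd y ⊆ ballSet ε (Hd x))
    (hsec : ∀ x : X, ∀ y ∈ Hd x, Hd x ∩ {z | ∃ t : ℝ, |t| ≤ τ ∧ z = φ t y} = {y})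
    (hper : ∀ (z : X) (d : ℝ), φ d z = z → d = 0 ∨ T ≤ |d|)
    (hτ : 0 < τ) (hT : 0 < T) :
    ∀ c > (0 : ℝ), ∃ η > (0 : ℝ), ∀ (y : X) (h : ℝ → ℝ), ContinuousOn h (Ici 0) →
      MonotoneOn h (Ici 0) → (∀ s ≥ (0 : ℝ), φ (h s) y ∈ Hd (φ s x)) →
      ∀ a ≥ (0 : ℝ), h (a + η) ≤ h a + c := by
  intro c hcpos
  by_contra hcon
  push_neg at hcon
  have key : ∀ n : ℕ, ∃ (y : X) (h : ℝ → ℝ), ContinuousOn h (Ici 0) ∧ MonotoneOn h (Ici 0) ∧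
      (∀ s ≥ (0 : ℝ), φ (h s) y ∈ Hd (φ s x)) ∧ ∃ a ≥ (0 : ℝ),
      h a + c < h (a + 1 / (n + 1)) := by
    intro n
    obtain ⟨y, h, h1, h2, h3, a, ha, h4⟩ := hcon (1 / (n + 1)) (by positivity)
    exact ⟨y, h, h1, h2, h3, a, ha, h4⟩
  choose y h hcont hmono htr a ha hbig using key
  set σ1 : ℝ := min c (min τ (T / 2)) with hσ1
  have hσ1pos : 0 < σ1 := lt_min hcpos (lt_min hτ (by linarith))
  -- points via intermediate value theorem
  have hIVT : ∀ n : ℕ, ∃ u ∈ Icc (a n) (a n + 1 / (n + 1)),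
      h n u = h n (a n) + σ1 := by
    intro n
    have hle : a n ≤ a n + 1 / (n + 1) := le_add_of_nonneg_right (by positivity)
    have hIcc : Icc (a n) (a n + 1 / (n + 1)) ⊆ Ici (0 : ℝ) :=
      fun u hu => le_trans (ha n) hu.1
    have := intermediate_value_Icc hle ((hcont n).mono hIcc)
    have hmem : h n (a n) + σ1 ∈ Icc (h n (a n)) (h n (a n + 1 / (n + 1))) := by
      constructor
      · linarith [hσ1pos]
      · have : σ1 ≤ c := min_le_left _ _
        linarith [hbig n]
    obtain ⟨u, hu, hhu⟩ := this hmem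
    exact ⟨u, hu, hhu⟩
  choose uu huu hhuu using hIVT
  set P : ℕ → X := fun n => φ (h n (a n)) (y n) with hP
  set w : ℕ → X := fun n => φ (a n) x with hw
  obtain ⟨⟨P', w'⟩, ψ, hψ, hlim⟩ := CompactSpace.tendsto_subseq (fun n => (P n, w n))
  have hPl : Tendsto (fun j => P (ψ j)) atTop (𝓝 P') :=
    (continuous_fst.tendsto _).comp hlim
  have hwl : Tendsto (fun j => w (ψ j)) atTop (𝓝 w') :=
    (continuous_snd.tendsto _).comp hlim
  -- membership 1 : P' ∈ Hd w'
  have hm1 : P' ∈ Hd w' := by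
    apply aux_memlim hcpt hne hsc
    intro c' hc'
    have e1 := (Metric.tendsto_nhds.1 hPl) c' hc'
    have e2 := (Metric.tendsto_nhds.1 hwl) c' hc'
    obtain ⟨j, h1, h2⟩ := (e1.and e2).exists
    exact ⟨P (ψ j), w (ψ j), by rw [dist_comm]; exact h1.le, by rw [dist_comm]; exact h2.le,
      htr (ψ j) (a (ψ j)) (ha (ψ j))⟩
  -- membership 2 : φ σ1 P' ∈ Hd w'
  have hm2 : φ σ1 P' ∈ Hd w' := by
    apply aux_memlim hcpt hne hsc
    intro c' hc'
    obtain ⟨η', hη', hsm⟩ := aux_smalltime hc h0 (c' / 2) (by linarith)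
    have e1 : ∀ᶠ j in atTop, dist (φ σ1 P') (φ σ1 (P (ψ j))) < c' := by
      have h5 := ((aux_cphi hc σ1).tendsto P').comp hPl
      filter_upwards [(Metric.tendsto_nhds.1 h5) c' hc'] with j hj
      rw [dist_comm]; exact hj
    have e2 : ∀ᶠ j in atTop, dist (w (ψ j)) w' < c' / 2 :=
      (Metric.tendsto_nhds.1 hwl) (c' / 2) (by linarith)
    have e3 : ∀ᶠ j in atTop, (1 : ℝ) / (ψ j + 1) ≤ η' := by
      have h1 : Tendsto (fun j : ℕ => 1 / ((ψ j : ℝ) + 1)) atTop (𝓝 0) :=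
        tendsto_one_div_add_atTop_nhds_zero_nat.comp hψ.tendsto_atTop
      filter_upwards [(Metric.tendsto_nhds.1 h1) η' hη'] with j hj
      rw [Real.dist_eq, sub_zero, abs_of_pos (by positivity)] at hj
      exact hj.le
    obtain ⟨j, h1, h2, h3⟩ := (e1.and (e2.and e3)).exists
    set n := ψ j
    refine ⟨φ σ1 (P n), φ (uu n) x, h1.le, ?_, ?_⟩
    · -- dist w' (φ (uu n) x) ≤ c'
      have hx1 : φ (uu n) x = φ (uu n - a n) (w n) := by
        rw [hw]; rw [← hadd]; ring_nf
      have hd1 : dist (w n) (φ (uu n - a n) (w n)) ≤ c' / 2 := by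
        rw [dist_comm]
        apply hsm
        rw [abs_of_nonneg (by linarith [(huu n).1] : (0:ℝ) ≤ uu n - a n)]
        have := (huu n).2
        have h6 : uu n - a n ≤ 1 / (n + 1) := by linarith
        exact le_trans h6 h3
      calc dist w' (φ (uu n) x) ≤ dist w' (w n) + dist (w n) (φ (uu n) x) := dist_triangle _ _ _
        _ ≤ c' / 2 + c' / 2 := by
            refine add_le_add (by rw [dist_comm]; exact h2.le) ?_
            rw [hx1]; exact hd1
        _ = c' := by ring
    · -- φ σ1 (P n) ∈ Hd (φ (uu n) x)
      have hx2 : φ σ1 (P n) = φ (h n (uu n)) (y n) := by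
        rw [hP]
        show φ σ1 (φ (h n (a n)) (y n)) = _
        rw [← hadd, hhuu n]; ring_nf
      rw [hx2]
      exact htr n (uu n) (le_trans (ha n) (huu n).1)
  -- contradiction via the section property
  have hmem := hsec w' P' hm1
  have : φ σ1 P' ∈ Hd w' ∩ {z | ∃ t : ℝ, |t| ≤ τ ∧ z = φ t P'} := by
    refine ⟨hm2, σ1, ?_, rfl⟩
    rw [abs_of_pos hσ1pos]
    exact le_trans (min_le_right _ _) (min_le_left _ _)
  rw [hmem] at this
  have heq : φ σ1 P' = P' := this
  rcases hper P' σ1 heq with h' | h'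
  · exact absurd h' hσ1pos.ne'
  · have hσ1T : σ1 ≤ T / 2 := le_trans (min_le_right _ _) (min_le_right _ _)
    rw [abs_of_pos hσ1pos] at h'
    linarith


/-- Uniform lower bound: base time advancing by 1 forces flow time to advance. -/
theorem aux_modB (hc : Continuous fun p : ℝ × X => φ p.1 p.2)
    (h0 : ∀ x, φ 0 x = x) (hadd : ∀ s t x, φ (s + t) x = φ s (φ t x))
    (hcpt : ∀ x : X, IsCompact (Hd x)) (hne : ∀ x : X, x ∈ Hd x)
    (hsc : ∀ x : X, ∀ ε > (0 : ℝ), ∃ δ > (0 : ℝ), ∀ y : X, dist x y < δ → Hd y ⊆ ballSet ε (Hd x))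
    (hmon : ∀ v : X, ∀ t ∈ Ioo (0 : ℝ) e, Hd v ∩ Hd (φ t v) = ∅)
    (he : 0 < e) :
    ∃ e3 > (0 : ℝ), ∀ (y : X) (h : ℝ → ℝ), ContinuousOn h (Ici 0) →
      MonotoneOn h (Ici 0) → (∀ s ≥ (0 : ℝ), φ (h s) y ∈ Hd (φ s x)) →
      ∀ a ≥ (0 : ℝ), h a + e3 ≤ h (a + 1) := by
  by_contra hcon
  push_neg at hcon
  have key : ∀ n : ℕ, ∃ (y : X) (h : ℝ → ℝ), ContinuousOn h (Ici 0) ∧ MonotoneOn h (Ici 0) ∧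
      (∀ s ≥ (0 : ℝ), φ (h s) y ∈ Hd (φ s x)) ∧ ∃ a ≥ (0 : ℝ),
      h (a + 1) < h a + 1 / (n + 1) := by
    intro n
    obtain ⟨y, h, h1, h2, h3, a, ha, h4⟩ := hcon (1 / (n + 1)) (by positivity)
    exact ⟨y, h, h1, h2, h3, a, ha, h4⟩
  choose y h hcont hmono htr a ha hsmall using key
  set σ2 : ℝ := min e 1 / 2 with hσ2
  have hσ2pos : 0 < σ2 := by
    have : (0:ℝ) < min e 1 := lt_min he one_pos
    positivity
  have hσ2e : σ2 < e := by
    have h1 : min e 1 ≤ e := min_le_left _ _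
    have : (0:ℝ) < min e 1 := lt_min he one_pos
    rw [hσ2]; linarith
  have hσ21 : σ2 ≤ 1 := by
    have h1 : min e 1 ≤ 1 := min_le_right _ _
    have : (0:ℝ) < min e 1 := lt_min he one_pos
    rw [hσ2]; linarith
  set P : ℕ → X := fun n => φ (h n (a n)) (y n) with hP
  set w : ℕ → X := fun n => φ (a n) x with hw
  obtain ⟨⟨P', w'⟩, ψ, hψ, hlim⟩ := CompactSpace.tendsto_subseq (fun n => (P n, w n))
  have hPl : Tendsto (fun j => P (ψ j)) atTop (𝓝 P') :=
    (continuous_fst.tendsto _).comp hlim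
  have hwl : Tendsto (fun j => w (ψ j)) atTop (𝓝 w') :=
    (continuous_snd.tendsto _).comp hlim
  have hm1 : P' ∈ Hd w' := by
    apply aux_memlim hcpt hne hsc
    intro c' hc'
    have e1 := (Metric.tendsto_nhds.1 hPl) c' hc'
    have e2 := (Metric.tendsto_nhds.1 hwl) c' hc'
    obtain ⟨j, h1, h2⟩ := (e1.and e2).exists
    exact ⟨P (ψ j), w (ψ j), by rw [dist_comm]; exact h1.le, by rw [dist_comm]; exact h2.le,
      htr (ψ j) (a (ψ j)) (ha (ψ j))⟩
  have hm2 : P' ∈ Hd (φ σ2 w') := by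
    apply aux_memlim hcpt hne hsc
    intro c' hc'
    obtain ⟨η', hη', hsm⟩ := aux_smalltime hc h0 (c' / 2) (by linarith)
    have e1 : ∀ᶠ j in atTop, dist (P (ψ j)) P' < c' / 2 :=
      (Metric.tendsto_nhds.1 hPl) (c' / 2) (by linarith)
    have e2 : ∀ᶠ j in atTop, dist (φ σ2 (w (ψ j))) (φ σ2 w') < c' := by
      have h5 := ((aux_cphi hc σ2).tendsto w').comp hwl
      exact (Metric.tendsto_nhds.1 h5) c' hc'
    have e3 : ∀ᶠ j in atTop, (1 : ℝ) / (ψ j + 1) ≤ η' := by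
      have h1 : Tendsto (fun j : ℕ => 1 / ((ψ j : ℝ) + 1)) atTop (𝓝 0) :=
        tendsto_one_div_add_atTop_nhds_zero_nat.comp hψ.tendsto_atTop
      filter_upwards [(Metric.tendsto_nhds.1 h1) η' hη'] with j hj
      rw [Real.dist_eq, sub_zero, abs_of_pos (by positivity)] at hj
      exact hj.le
    obtain ⟨j, h1, h2, h3⟩ := (e1.and (e2.and e3)).exists
    set n := ψ j
    set ε' : ℝ := h n (a n + σ2) - h n (a n) with hε'
    have hε'0 : 0 ≤ ε' := by
      rw [hε']
      have := hmono n (mem_Ici.2 (ha n)) (mem_Ici.2 (by linarith [ha n, hσ2pos.le] : (0:ℝ) ≤ a n + σ2))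
        (by linarith [hσ2pos.le])
      linarith
    have hε'small : ε' ≤ η' := by
      have hmono2 := hmono n (mem_Ici.2 (by linarith [ha n, hσ2pos.le] : (0:ℝ) ≤ a n + σ2))
        (mem_Ici.2 (by linarith [ha n] : (0:ℝ) ≤ a n + 1)) (by linarith)
      have := hsmall n
      rw [hε']
      have h6 : h n (a n + σ2) - h n (a n) ≤ 1 / (n + 1) := by linarith
      exact le_trans h6 h3
    refine ⟨φ (h n (a n + σ2)) (y n), φ σ2 (w n), ?_, by rw [dist_comm]; exact h2.le, ?_⟩
    · have hx2 : φ (h n (a n + σ2)) (y n) = φ ε' (P n) := by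
        rw [hP]
        show _ = φ ε' (φ (h n (a n)) (y n))
        rw [← hadd, hε']; ring_nf
      rw [hx2]
      calc dist P' (φ ε' (P n)) ≤ dist P' (P n) + dist (P n) (φ ε' (P n)) := dist_triangle _ _ _
        _ ≤ c' / 2 + c' / 2 := by
            refine add_le_add (by rw [dist_comm]; exact h1.le) ?_
            rw [dist_comm]
            apply hsm
            rw [abs_of_nonneg hε'0]
            exact hε'small
        _ = c' := by ring
    · have hx3 : φ σ2 (w n) = φ (a n + σ2) x := by
        rw [hw, ← hadd]; ring_nf
      rw [hx3]
      exact htr n (a n + σ2) (by linarith [ha n, hσ2pos])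
  have hdisj := hmon w' σ2 ⟨hσ2pos, hσ2e⟩
  rw [eq_empty_iff_forall_notMem] at hdisj
  exact hdisj P' ⟨hm1, hm2⟩

end Aux3
section AuxIter

theorem aux_iterup {h : ℝ → ℝ} (hmono : MonotoneOn h (Ici 0)) {η1 : ℝ} (hη1 : 0 < η1)
    (hstep : ∀ a ≥ (0 : ℝ), h (a + η1) ≤ h a + 1) :
    ∀ a ≥ (0 : ℝ), ∀ s ≥ (0 : ℝ), h (a + s) ≤ h a + (s / η1 + 1) := by
  intro a ha s hs
  have hind : ∀ m : ℕ, h (a + m * η1) ≤ h a + m := by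
    intro m
    induction m with
    | zero => simp
    | succ p ih =>
        have he1 : a + ((p : ℕ) + 1 : ℕ) * η1 = (a + p * η1) + η1 := by push_cast; ring
        rw [he1]
        have h2 := hstep (a + p * η1) (add_nonneg ha (by positivity))
        push_cast
        linarith
  set m := ⌈s / η1⌉₊ with hm
  have h1 : s ≤ m * η1 := by
    have h4 := Nat.le_ceil (s / η1)
    have h5 := mul_le_mul_of_nonneg_right h4 hη1.le
    rwa [div_mul_cancel₀ s hη1.ne'] at h5
  have h2 : (m : ℝ) ≤ s / η1 + 1 := (Nat.ceil_lt_add_one (by positivity)).le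
  have h3 : h (a + s) ≤ h (a + m * η1) :=
    hmono (mem_Ici.2 (by linarith)) (mem_Ici.2 (add_nonneg ha (by positivity))) (by linarith)
  linarith [hind m]

theorem aux_iterlow {h : ℝ → ℝ} {e3 : ℝ}
    (hstep : ∀ a ≥ (0 : ℝ), h a + e3 ≤ h (a + 1)) :
    ∀ a ≥ (0 : ℝ), ∀ m : ℕ, h a + m * e3 ≤ h (a + m) := by
  intro a ha m
  induction m with
  | zero => simp
  | succ p ih =>
      have h2 := hstep (a + p) (add_nonneg ha p.cast_nonneg)
      have he1 : a + ((p : ℕ) + 1 : ℕ) = (a + (p : ℝ)) + 1 := by push_cast; ring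
      rw [he1]
      push_cast
      linarith

end AuxIter

section AuxLim

variable {X : Type u} [MetricSpace X] [CompactSpace X] {φ : ℝ → X → X} {Hd : X → Set X}
  {τ T e : ℝ}

set_option maxHeartbeats 1000000 in
theorem aux_limit (hc : Continuous fun p : ℝ × X => φ p.1 p.2)
    (h0 : ∀ x, φ 0 x = x) (hadd : ∀ s t x, φ (s + t) x = φ s (φ t x))
    (hcpt : ∀ x : X, IsCompact (Hd x)) (hne : ∀ x : X, x ∈ Hd x)
    (hsc : ∀ x : X, ∀ ε > (0 : ℝ), ∃ δ > (0 : ℝ), ∀ y : X, dist x y < δ → Hd y ⊆ ballSet ε (Hd x))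
    (hsec : ∀ x : X, ∀ y ∈ Hd x, Hd x ∩ {z | ∃ t : ℝ, |t| ≤ τ ∧ z = φ t y} = {y})
    (hτ : 0 < τ)
    (hmon : ∀ v : X, ∀ t ∈ Ioo (0 : ℝ) e, Hd v ∩ Hd (φ t v) = ∅) (he : 0 < e)
    (hper : ∀ (z : X) (d : ℝ), φ d z = z → d = 0 ∨ T ≤ |d|) (hT : 0 < T)
    {x us ws : X} (uu yy : ℕ → X) (hh : ℕ → ℝ → ℝ) (tt : ℕ → ℝ)
    (hhc : ∀ n, ContinuousOn (hh n) (Ici 0))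
    (hhm : ∀ n, MonotoneOn (hh n) (Ici 0))
    (htr : ∀ n, ∀ s ≥ (0 : ℝ), φ (hh n s) (yy n) ∈ Hd (φ s x))
    (hud : ∀ n, uu n = φ (hh n (tt n)) (yy n))
    (htt : Tendsto tt atTop atTop)
    (hul : Tendsto uu atTop (𝓝 us))
    (hwl : Tendsto (fun n => φ (tt n) x) atTop (𝓝 ws)) :
    us ∈ Wstable φ Hd ws ∩ Wunstable φ Hd ws := by
  obtain ⟨η1, hη1, hstep1⟩ := aux_modA hc h0 hadd hcpt hne hsc hsec hper hτ hT 1 one_pos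
  obtain ⟨e3, he3, hstepB⟩ := aux_modB hc h0 hadd hcpt hne hsc hmon he
  set w : ℕ → X := fun n => φ (tt n) x with hwdef
  set k : ℕ → ℝ → ℝ := fun n s => hh n (max (tt n + s) 0) - hh n (tt n) with hkdef
  have Ev0 : ∀ᶠ n in atTop, 0 ≤ tt n := htt.eventually_ge_atTop 0
  have Ev : ∀ s : ℝ, ∀ᶠ n in atTop, 0 ≤ tt n + s := fun s =>
    (htt.eventually_ge_atTop (-s)).mono fun n hn => by linarith
  have hkval : ∀ (s : ℝ) (n : ℕ), 0 ≤ tt n + s →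
      k n s = hh n (tt n + s) - hh n (tt n) := by
    intro s n hn
    rw [hkdef]
    simp only
    rw [max_eq_left hn]
  have hktrack : ∀ (s : ℝ) (n : ℕ), 0 ≤ tt n + s →
      φ (k n s) (uu n) ∈ Hd (φ s (w n)) := by
    intro s n hn
    rw [hkval s n hn, hud n]
    have h1 : φ (hh n (tt n + s) - hh n (tt n)) (φ (hh n (tt n)) (yy n))
        = φ (hh n (tt n + s)) (yy n) := by rw [← hadd]; ring_nf
    rw [h1]
    have h2 : φ s (w n) = φ (tt n + s) x := by
      rw [hwdef]; show φ s (φ (tt n) x) = _; rw [← hadd]; ring_nf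
    rw [h2]
    exact htr n (tt n + s) hn
  -- uniform bounds on k
  have hkb : ∀ s : ℝ, ∀ᶠ n in atTop, |k n s| ≤ |s| / η1 + 1 := by
    intro s
    filter_upwards [Ev0, Ev s] with n h1 h2
    rw [hkval s n h2]
    rcases le_or_gt 0 s with hs | hs
    · rw [abs_of_nonneg hs]
      have hup := aux_iterup (hhm n) hη1
        (fun a ha => hstep1 (yy n) (hh n) (hhc n) (hhm n) (htr n) a ha) (tt n) h1 s hs
      have hlo : hh n (tt n) ≤ hh n (tt n + s) :=
        hhm n (mem_Ici.2 h1) (mem_Ici.2 h2) (by linarith)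
      rw [abs_le]
      have habs : (0:ℝ) ≤ s / η1 + 1 :=
        add_nonneg (div_nonneg hs hη1.le) zero_le_one
      constructor
      · linarith
      · linarith
    · rw [abs_of_neg hs]
      have hup := aux_iterup (hhm n) hη1
        (fun a ha => hstep1 (yy n) (hh n) (hhc n) (hhm n) (htr n) a ha) (tt n + s) h2 (-s)
        (by linarith)
      rw [show tt n + s + -s = tt n by ring] at hup
      have hlo : hh n (tt n + s) ≤ hh n (tt n) :=
        hhm n (mem_Ici.2 h2) (mem_Ici.2 h1) (by linarith)
      rw [abs_le]
      have habs : (0:ℝ) ≤ -s / η1 + 1 :=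
        add_nonneg (div_nonneg (by linarith) hη1.le) zero_le_one
      constructor
      · linarith
      · linarith
  have hbdd : ∀ s : ℝ, IsBoundedUnder (· ≤ ·) atTop (fun n => k n s) := fun s =>
    ⟨|s| / η1 + 1, eventually_map.2 ((hkb s).mono fun n hn => (abs_le.1 hn).2)⟩
  have hbddge : ∀ s : ℝ, IsBoundedUnder (· ≥ ·) atTop (fun n => k n s) := fun s =>
    ⟨-(|s| / η1 + 1), eventually_map.2 ((hkb s).mono fun n hn => (abs_le.1 hn).1)⟩
  have hcb : ∀ s : ℝ, IsCoboundedUnder (· ≤ ·) atTop (fun n => k n s) := fun s =>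
    (hbddge s).isCoboundedUnder_le
  set K : ℝ → ℝ := fun s => limsup (fun n => k n s) atTop with hKdef
  have K0 : K 0 = 0 := by
    have hev : ∀ᶠ n in atTop, k n 0 = 0 := by
      filter_upwards [Ev0] with n hn
      rw [hkdef]
      simp only
      rw [add_zero, max_eq_left hn, sub_self]
    rw [hKdef]
    simp only
    rw [limsup_congr hev, limsup_const]
  have hkmono : ∀ n : ℕ, ∀ s s' : ℝ, s ≤ s' → k n s ≤ k n s' := by
    intro n s s' hss
    rw [hkdef]
    simp only
    have h1 : max (tt n + s) 0 ≤ max (tt n + s') 0 :=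
      max_le_max (by linarith) le_rfl
    have h2 := hhm n (mem_Ici.2 (le_max_right _ _)) (mem_Ici.2 (le_max_right _ _)) h1
    linarith
  have Kmono : Monotone K := by
    intro s s' hss
    exact limsup_le_limsup (Eventually.of_forall fun n => hkmono n s s' hss) (hcb s) (hbdd s')
  have hconstadd : ∀ (s c : ℝ), limsup (fun n => k n s + c) atTop = K s + c := by
    intro s c
    have hmone : Monotone (fun r : ℝ => r + c) := monotone_id.add_const c
    have := hmone.map_limsup_of_continuousAt (fun n => k n s)
      ((continuous_id.add continuous_const).continuousAt) (hbdd s) (hcb s)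
    exact this.symm
  have Kshift : ∀ c > (0 : ℝ), ∃ η > (0 : ℝ), ∀ s d : ℝ, 0 ≤ d → d ≤ η →
      K (s + d) ≤ K s + c := by
    intro c hcpos
    obtain ⟨η, hη, hstepc⟩ := aux_modA hc h0 hadd hcpt hne hsc hsec hper hτ hT c hcpos
    refine ⟨η, hη, fun s d hd hdη => ?_⟩
    have hev : ∀ᶠ n in atTop, k n (s + d) ≤ k n s + c := by
      filter_upwards [Ev0, Ev s] with n h1 h2
      have h3 : 0 ≤ tt n + (s + d) := by linarith
      rw [hkval (s + d) n h3, hkval s n h2]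
      have h4 := hstepc (yy n) (hh n) (hhc n) (hhm n) (htr n) (tt n + s) h2
      have h5 : hh n (tt n + (s + d)) ≤ hh n (tt n + s + η) := by
        apply hhm n (mem_Ici.2 (by linarith)) (mem_Ici.2 (by linarith)) (by linarith)
      linarith
    calc K (s + d) ≤ limsup (fun n => k n s + c) atTop :=
          limsup_le_limsup hev (hcb (s + d))
            ⟨|s| / η1 + 1 + c, eventually_map.2 (((hkb s).mono
              fun n hn => by linarith [(abs_le.1 hn).2]))⟩
      _ = K s + c := hconstadd s c
  have Klow : ∀ s : ℝ, K s + e3 ≤ K (s + 1) := by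
    intro s
    have hev : ∀ᶠ n in atTop, k n s + e3 ≤ k n (s + 1) := by
      filter_upwards [Ev0, Ev s] with n h1 h2
      have h3 : 0 ≤ tt n + (s + 1) := by linarith
      rw [hkval (s + 1) n h3, hkval s n h2]
      have h4 := hstepB (yy n) (hh n) (hhc n) (hhm n) (htr n) (tt n + s) h2
      rw [show tt n + (s + 1) = tt n + s + 1 by ring]
      linarith
    have h6 : limsup (fun n => k n s + e3) atTop ≤ K (s + 1) := by
      apply limsup_le_limsup hev _ (hbdd (s + 1))
      exact IsBoundedUnder.isCoboundedUnder_le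
        ⟨-(|s| / η1 + 1) + e3, eventually_map.2 (((hkb s).mono
          fun n hn => by linarith [(abs_le.1 hn).1]))⟩
    rw [hconstadd s e3] at h6
    exact h6
  have Ktrack : ∀ s : ℝ, φ (K s) us ∈ Hd (φ s ws) := by
    intro s
    apply aux_memlim hcpt hne hsc
    intro c' hc'
    obtain ⟨η', hη', hsm⟩ := aux_smalltime hc h0 (c' / 2) (by linarith)
    have E1 : ∀ᶠ n in atTop, dist (φ (K s) (uu n)) (φ (K s) us) < c' / 2 := by
      have h5 := ((aux_cphi hc (K s)).tendsto us).comp hul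
      exact (Metric.tendsto_nhds.1 h5) (c' / 2) (by linarith)
    have E2 : ∀ᶠ n in atTop, dist (φ s (w n)) (φ s ws) < c' := by
      have h5 := ((aux_cphi hc s).tendsto ws).comp hwl
      exact (Metric.tendsto_nhds.1 h5) c' hc'
    have E4 : ∀ᶠ n in atTop, k n s < K s + η' :=
      eventually_lt_of_limsup_lt (by linarith) (hbdd s)
    have F : ∃ᶠ n in atTop, K s - η' < k n s :=
      frequently_lt_of_lt_limsup (hcb s) (by linarith)
    obtain ⟨n, hF, hE1, hE2, hEv, hE4⟩ :=
      (F.and_eventually (E1.and (E2.and ((Ev s).and E4)))).exists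
    refine ⟨φ (k n s) (uu n), φ s (w n), ?_, by rw [dist_comm]; exact hE2.le,
      hktrack s n hEv⟩
    have hsplit : φ (k n s) (uu n) = φ (k n s - K s) (φ (K s) (uu n)) := by
      rw [← hadd]; ring_nf
    calc dist (φ (K s) us) (φ (k n s) (uu n))
        ≤ dist (φ (K s) us) (φ (K s) (uu n))
          + dist (φ (K s) (uu n)) (φ (k n s) (uu n)) := dist_triangle _ _ _
      _ ≤ c' / 2 + c' / 2 := by
          refine add_le_add (by rw [dist_comm]; exact hE1.le) ?_
          rw [hsplit, dist_comm]
          apply hsm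
          rw [abs_le]
          constructor <;> [linarith; linarith]
      _ = c' := by ring
  have Kcont : Continuous K := by
    rw [Metric.continuous_iff]
    intro s ε hε
    obtain ⟨η, hη, hsh⟩ := Kshift (ε / 2) (by linarith)
    refine ⟨η, hη, fun s' hs' => ?_⟩
    rw [Real.dist_eq] at hs' ⊢
    rcases le_or_gt s s' with h | h
    · have h1 : K s' ≤ K s + ε / 2 := by
        have h2 := hsh s (s' - s) (by linarith) (by rw [abs_of_nonneg (by linarith)] at hs'; linarith)
        rwa [show s + (s' - s) = s' by ring] at h2
      have h3 : K s ≤ K s' := Kmono h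
      rw [abs_of_nonneg (by linarith)]
      linarith
    · have h1 : K s ≤ K s' + ε / 2 := by
        have h2 := hsh s' (s - s') (by linarith) (by rw [abs_of_neg (by linarith)] at hs'; linarith)
        rwa [show s' + (s - s') = s by ring] at h2
      have h3 : K s' ≤ K s := Kmono h.le
      rw [abs_of_nonpos (by linarith)]
      linarith
  have Kstrict : StrictMono K := by
    intro s s' hss
    set d : ℝ := min (s' - s) (min e 1) / 2 with hd
    have hd0 : 0 < d := by
      have h1 : (0:ℝ) < min (s' - s) (min e 1) :=
        lt_min (by linarith) (lt_min he one_pos)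
      positivity
    have hde : d < e := by
      have h1 : min (s' - s) (min e 1) ≤ min e 1 := min_le_right _ _
      have h2 : min e 1 ≤ e := min_le_left _ _
      have h3 : (0:ℝ) < min e 1 := lt_min he one_pos
      rw [hd]; linarith
    have hds : s + d < s' := by
      have h1 : min (s' - s) (min e 1) ≤ s' - s := min_le_left _ _
      have h2 : (0:ℝ) < min (s' - s) (min e 1) := lt_min (by linarith) (lt_min he one_pos)
      rw [hd]; linarith
    have hKd : K s < K (s + d) := by
      rcases lt_or_ge (K s) (K (s + d)) with h | h
      · exact h
      · exfalso
        have heq : K (s + d) = K s := le_antisymm h (Kmono (by linarith))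
        have m1 := Ktrack s
        have m2 := Ktrack (s + d)
        rw [heq] at m2
        have h2 : φ (s + d) ws = φ d (φ s ws) := by rw [← hadd]; ring_nf
        rw [h2] at m2
        have hdisj := hmon (φ s ws) d ⟨hd0, hde⟩
        rw [eq_empty_iff_forall_notMem] at hdisj
        exact hdisj (φ (K s) us) ⟨m1, m2⟩
    exact lt_of_lt_of_le hKd (Kmono (by linarith))
  have Kbig : ∀ m : ℕ, (m : ℝ) * e3 ≤ K m := by
    intro m
    induction m with
    | zero => simp [K0]
    | succ p ih =>
        have h1 := Klow p
        have h2 : ((p : ℕ) + 1 : ℕ) = ((p : ℝ) + 1 : ℝ) := by push_cast; ring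
        push_cast
        rw [show (p : ℝ) + 1 = (p : ℝ) + 1 from rfl]
        calc ((p : ℝ) + 1) * e3 = (p : ℝ) * e3 + e3 := by ring
          _ ≤ K p + e3 := by linarith
          _ ≤ K ((p : ℝ) + 1) := h1
  have Ksmall : ∀ m : ℕ, K (-(m : ℝ)) ≤ -(m : ℝ) * e3 := by
    intro m
    induction m with
    | zero => simp [K0]
    | succ p ih =>
        have h1 := Klow (-(p : ℝ) - 1)
        rw [show -(p : ℝ) - 1 + 1 = -(p : ℝ) by ring] at h1
        push_cast
        rw [show -((p : ℝ) + 1) = -(p : ℝ) - 1 by ring]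
        calc K (-(p : ℝ) - 1) ≤ K (-(p : ℝ)) - e3 := by linarith
          _ ≤ -(p : ℝ) * e3 - e3 := by linarith
          _ = (-(p : ℝ) - 1) * e3 := by ring
  constructor
  · refine ⟨K, Kcont.continuousOn, Kstrict.strictMonoOn _, K0, ?_, ?_, fun s hs => Ktrack s⟩
    · intro s hs
      have h1 : K 0 ≤ K s := Kmono hs
      rw [K0] at h1
      exact mem_Ici.2 h1
    · intro v hv
      obtain ⟨m, hm⟩ := exists_nat_ge (v / e3)
      have hvm : v ≤ (m : ℝ) * e3 := by
        have := mul_le_mul_of_nonneg_right hm he3.le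
        rwa [div_mul_cancel₀ v he3.ne'] at this
      have hmem : v ∈ Icc (K 0) (K (m : ℝ)) :=
        ⟨by rw [K0]; exact hv, le_trans hvm (Kbig m)⟩
      have h5 := intermediate_value_Icc (by positivity : (0:ℝ) ≤ (m:ℝ))
        Kcont.continuousOn hmem
      exact image_mono Icc_subset_Ici_self h5
  · refine ⟨K, Kcont.continuousOn, Kstrict.strictMonoOn _, K0, ?_, ?_, fun s hs => Ktrack s⟩
    · intro s hs
      have h1 : K s ≤ K 0 := Kmono hs
      rw [K0] at h1
      exact mem_Iic.2 h1
    · intro v hv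
      obtain ⟨m, hm⟩ := exists_nat_ge (-v / e3)
      have hvm : -(m : ℝ) * e3 ≤ v := by
        have := mul_le_mul_of_nonneg_right hm he3.le
        rw [div_mul_cancel₀ (-v) he3.ne'] at this
        linarith
      have hmem : v ∈ Icc (K (-(m : ℝ))) (K 0) :=
        ⟨le_trans (Ksmall m) hvm, by rw [K0]; exact hv⟩
      have h5 := intermediate_value_Icc (by simp : -(m:ℝ) ≤ 0)
        Kcont.continuousOn hmem
      exact image_mono Icc_subset_Iic_self h5

end AuxLim
set_option maxHeartbeats 1000000 in
theorem stmt12' {X : Type u} [MetricSpace X] [CompactSpace X] [ConnectedSpace X]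
    [LocallyConnectedSpace X] (φ : ℝ → X → X)
    (hreg : (Continuous fun p : ℝ × X => φ p.1 p.2) ∧ (∀ x, φ 0 x = x) ∧
      (∀ (s t : ℝ) (x : X), φ (s + t) x = φ s (φ t x)))
    (hregpt : ∀ x : X, ∃ t : ℝ, φ t x ≠ x)
    (Hd : X → Set X)
    (hcpt : ∀ x : X, IsCompact (Hd x)) (hne : ∀ x : X, x ∈ Hd x)
    (hsc : ∀ x : X, ∀ ε > (0 : ℝ), ∃ δ > (0 : ℝ), ∀ y : X, dist x y < δ → Hd y ⊆ ballSet ε (Hd x))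
    (τ : ℝ) (hτ : 0 < τ)
    (hsec : ∀ x : X, ∀ y ∈ Hd x, Hd x ∩ {z | ∃ t : ℝ, |t| ≤ τ ∧ z = φ t y} = {y})
    (e : ℝ) (he : 0 < e)
    (hmon : ∀ v : X, ∀ t ∈ Ioo (0 : ℝ) e, Hd v ∩ Hd (φ t v) = ∅)
    (hconst : ∀ x : X, Wstable φ Hd x ∩ Wunstable φ Hd x = {x}) (x : X) :
    Tendsto (fun t : ℝ => diam {z | ∃ y ∈ Wstable φ Hd x, ∃ g : ℝ → ℝ,
        ContinuousOn g (Ici 0) ∧ g 0 = 0 ∧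
        (∀ s ≥ (0 : ℝ), φ (g s) y ∈ Hd (φ s x)) ∧ z = φ (g t) y})
      atTop (𝓝 0) := by
  obtain ⟨hc, h0, hadd⟩ := hreg
  obtain ⟨T, hT, hper⟩ := aux_period hc h0 hadd hregpt
  set S : ℝ → Set X := fun t => {z | ∃ y ∈ Wstable φ Hd x, ∃ g : ℝ → ℝ,
        ContinuousOn g (Ici 0) ∧ g 0 = 0 ∧
        (∀ s ≥ (0 : ℝ), φ (g s) y ∈ Hd (φ s x)) ∧ z = φ (g t) y} with hSdef
  by_contra hcon
  rw [Metric.tendsto_nhds] at hcon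
  push_neg at hcon
  obtain ⟨ε0, hε0, hfreq⟩ := hcon
  have hfreq' : ∃ᶠ s in atTop, ε0 ≤ diam (S s) := by
    refine hfreq.mono fun s hs => ?_
    rw [Real.dist_eq, sub_zero, abs_of_nonneg diam_nonneg] at hs
    exact hs
  have hts : ∀ n : ℕ, ∃ s : ℝ, (n : ℝ) ≤ s ∧ ε0 ≤ diam (S s) := by
    intro n
    obtain ⟨s, h1, h2⟩ := (hfreq'.and_eventually (eventually_ge_atTop (n : ℝ))).exists
    exact ⟨s, h2, h1⟩
  choose t htn htd using hts
  have ht0 : ∀ n : ℕ, (0 : ℝ) ≤ t n := fun n => le_trans (Nat.cast_nonneg n) (htn n)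
  have hpairs : ∀ n : ℕ, ∃ pp qq : X, pp ∈ S (t n) ∧ qq ∈ S (t n) ∧ ε0 / 2 < dist pp qq := by
    intro n
    by_contra hcon2
    push_neg at hcon2
    have hle : diam (S (t n)) ≤ ε0 / 2 :=
      diam_le_of_forall_dist_le (by linarith) fun pp hp qq hq => hcon2 pp qq hp hq
    linarith [htd n]
  choose p q hpmem hqmem hpq using hpairs
  simp only [hSdef, mem_setOf_eq] at hpmem hqmem
  choose yp hypW gp hgpc hgp0 hgptr hpeq using hpmem
  choose yq hyqW gq hgqc hgq0 hgqtr hqeq using hqmem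
  simp only [Wstable, mem_setOf_eq] at hypW hyqW
  choose fp hfpc hfpm hfp0 hfpmap hfpsur hfptr using hypW
  choose fq hfqc hfqm hfq0 hfqmap hfqsur hfqtr using hyqW
  have hpval : ∀ n, p n = φ (fp n (t n)) (yp n) := by
    intro n
    rw [hpeq n]
    congr 1
    exact aux_unique hadd hsec hper hτ hT (hgpc n) (hfpc n) (hgp0 n) (hfp0 n)
      (hgptr n) (hfptr n) (t n) (ht0 n)
  have hqval : ∀ n, q n = φ (fq n (t n)) (yq n) := by
    intro n
    rw [hqeq n]
    congr 1
    exact aux_unique hadd hsec hper hτ hT (hgqc n) (hfqc n) (hgq0 n) (hfq0 n)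
      (hgqtr n) (hfqtr n) (t n) (ht0 n)
  obtain ⟨⟨⟨p', q'⟩, w'⟩, ψ, hψ, hlim⟩ :=
    CompactSpace.tendsto_subseq (fun n => ((p n, q n), φ (t n) x))
  have hpl : Tendsto (fun j => p (ψ j)) atTop (𝓝 p') :=
    ((continuous_fst.comp continuous_fst).tendsto _).comp hlim
  have hql : Tendsto (fun j => q (ψ j)) atTop (𝓝 q') :=
    ((continuous_snd.comp continuous_fst).tendsto _).comp hlim
  have hwl : Tendsto (fun j => φ (t (ψ j)) x) atTop (𝓝 w') :=
    (continuous_snd.tendsto _).comp hlim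
  have htt : Tendsto (fun j => t (ψ j)) atTop atTop := by
    apply tendsto_atTop_mono (fun j => ?_) 
    · exact tendsto_natCast_atTop_atTop
    · calc (j : ℝ) ≤ (ψ j : ℝ) := Nat.cast_le.2 hψ.le_apply
        _ ≤ t (ψ j) := htn (ψ j)
  have hkey1 := aux_limit hc h0 hadd hcpt hne hsc hsec hτ hmon he hper hT
    (fun j => p (ψ j)) (fun j => yp (ψ j)) (fun j => fp (ψ j)) (fun j => t (ψ j))
    (fun j => hfpc (ψ j)) (fun j => (hfpm (ψ j)).monotoneOn) (fun j => hfptr (ψ j))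
    (fun j => hpval (ψ j)) htt hpl hwl
  have hkey2 := aux_limit hc h0 hadd hcpt hne hsc hsec hτ hmon he hper hT
    (fun j => q (ψ j)) (fun j => yq (ψ j)) (fun j => fq (ψ j)) (fun j => t (ψ j))
    (fun j => hfqc (ψ j)) (fun j => (hfqm (ψ j)).monotoneOn) (fun j => hfqtr (ψ j))
    (fun j => hqval (ψ j)) htt hql hwl
  rw [hconst w'] at hkey1 hkey2
  have h1 : p' = w' := hkey1
  have h2 : q' = w' := hkey2
  have h3 : ε0 / 2 ≤ dist p' q' :=
    ge_of_tendsto (hpl.dist hql) (Eventually.of_forall fun j => (hpq (ψ j)).le)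
  rw [h1, h2, dist_self] at h3
  linarith


/-- For a regular expansive flow with expansive constant `δ`, the diameter of
`Φ_t(x, W^s_δ(x))` tends to `0` as `t → +∞`. -/
theorem stmt12 {X : Type u} [MetricSpace X] [CompactSpace X] [ConnectedSpace X]
    [LocallyConnectedSpace X] (φ : ℝ → X → X) (hreg : IsRegularFlow φ)
    (hexp : IsExpansiveFlow φ) (F : CrossSectionFamily φ) (δ : ℝ)
    (hδ : δ ∈ Ioc (0 : ℝ) F.r)
    (hconst : ∀ x : X, Wstable φ (F.H δ) x ∩ Wunstable φ (F.H δ) x = {x}) (x : X) :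
    Tendsto (fun t : ℝ => diam (secImage φ (F.H δ) x (Wstable φ (F.H δ) x) t))
      atTop (𝓝 0) := by
  obtain ⟨hflow, hregpt⟩ := hreg
  obtain ⟨⟨hcpt, hne, hsc⟩, τ, hτ, hnbhd, hsec⟩ := F.cross δ hδ
  obtain ⟨e, he, hmon⟩ := F.monot δ hδ
  exact stmt12' φ ⟨hflow.1, hflow.2.1, hflow.2.2⟩ hregpt (F.H δ) hcpt hne hsc τ hτ hsec
    e he hmon hconst x
end Aux
end

section
/- Let φ be a regular flow on a compact metric space X. If N is a field of neighborhoods and H is a field of cross sections, then the field N ∩ H defined by (N ∩ H)(x) = N(x) ∩ H(x) is a field of cross sections. -/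
open Set Metric Filter Topology

universe u

section Stmt18Aux

variable {X : Type u} [MetricSpace X]

lemma mem_ballSet_iff {r : ℝ} {K : Set X} {z : X} :
    z ∈ ballSet r K ↔ ∃ w ∈ K, dist z w ≤ r := by
  simp [ballSet, mem_iUnion, Metric.mem_closedBall]

/-- Limits of points of a semicontinuous closed-valued field belong to the value at the
limit base point. -/
lemma stmt18_limit_mem {h : X → Set X} {x : X} (hcl : IsClosed (h x))
    (hs : ∀ ε > (0:ℝ), ∃ δ > (0:ℝ), ∀ y, dist x y < δ → h y ⊆ ballSet ε (h x))
    {y z : ℕ → X} {l : X} (hy : Tendsto y atTop (𝓝 x))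
    (hz : ∀ n, z n ∈ h (y n)) (hzl : Tendsto z atTop (𝓝 l)) : l ∈ h x := by
  rw [← hcl.closure_eq, Metric.mem_closure_iff]
  intro ε hε
  obtain ⟨δ, hδ, hδ'⟩ := hs (ε/3) (by linarith)
  have h1 : ∀ᶠ n in atTop, dist x (y n) < δ := by
    filter_upwards [(Metric.tendsto_nhds.1 hy) δ hδ] with n hn
    rwa [dist_comm]
  have h2 : ∀ᶠ n in atTop, dist (z n) l < ε/3 := (Metric.tendsto_nhds.1 hzl) _ (by linarith)
  obtain ⟨n, hn1, hn2⟩ := (h1.and h2).exists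
  obtain ⟨w, hw, hwd⟩ := mem_ballSet_iff.1 (hδ' (y n) hn1 (hz n))
  refine ⟨w, hw, ?_⟩
  rw [dist_comm] at hn2
  calc dist l w ≤ dist l (z n) + dist (z n) w := dist_triangle _ _ _
    _ < ε := by linarith

lemma stmt18_tendsto_of_dist_lt {x : X} {y : ℕ → X}
    (hyd : ∀ n : ℕ, dist x (y n) < 1 / (n + 1)) : Tendsto y atTop (𝓝 x) := by
  rw [Metric.tendsto_nhds]
  intro ε' hε'
  obtain ⟨n0, hn0⟩ := exists_nat_one_div_lt hε'
  filter_upwards [eventually_ge_atTop n0] with n hn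
  rw [dist_comm]
  calc dist x (y n) < 1 / (n + 1) := hyd n
    _ ≤ 1 / (n0 + 1) := by
        apply one_div_le_one_div_of_le (by positivity)
        have : (n0 : ℝ) ≤ n := by exact_mod_cast hn
        linarith
    _ < ε' := hn0

/-- A sequential criterion for semicontinuity of a closed-valued field at a point of a
compact metric space. -/
lemma stmt18_semicont_of_seq [CompactSpace X] {h : X → Set X} {x : X} (hcl : IsClosed (h x))
    (key : ∀ (y z : ℕ → X) (l : X), Tendsto y atTop (𝓝 x) → (∀ n, z n ∈ h (y n)) →
      Tendsto z atTop (𝓝 l) → l ∈ h x) :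
    ∀ ε > (0:ℝ), ∃ δ > (0:ℝ), ∀ y, dist x y < δ → h y ⊆ ballSet ε (h x) := by
  intro ε hε
  by_contra hc
  push_neg at hc
  have H1 : ∀ n : ℕ, ∃ y, dist x y < 1/(n+1) ∧ ∃ z, z ∈ h y ∧ z ∉ ballSet ε (h x) := by
    intro n
    obtain ⟨y, hy, hns⟩ := hc (1/(n+1)) (by positivity)
    obtain ⟨z, hz1, hz2⟩ := Set.not_subset.1 hns
    exact ⟨y, hy, z, hz1, hz2⟩
  choose y hyd z hzmem hznot using H1
  have hy : Tendsto y atTop (𝓝 x) := stmt18_tendsto_of_dist_lt hyd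
  obtain ⟨l, -, σ, hσ, hzl⟩ := isCompact_univ.tendsto_subseq (fun n => mem_univ (z n))
  have hl := key (y ∘ σ) (z ∘ σ) l (hy.comp hσ.tendsto_atTop) (fun n => hzmem (σ n)) hzl
  obtain ⟨n, hn⟩ := ((Metric.tendsto_nhds.1 hzl) ε hε).exists
  exact hznot (σ n) (mem_ballSet_iff.2 ⟨l, hl, le_of_lt hn⟩)

lemma stmt18_flowSat_eq_image (φ : ℝ → X → X) (I : Set ℝ) (h : X → Set X) (x : X) :
    flowSat φ I h x = (fun p : ℝ × X => φ p.1 p.2) '' (I ×ˢ h x) := by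
  ext w
  constructor
  · rintro ⟨t, ht, v, hv, rfl⟩; exact ⟨(t, v), ⟨ht, hv⟩, rfl⟩
  · rintro ⟨⟨t, v⟩, ⟨ht, hv⟩, rfl⟩; exact ⟨t, ht, v, hv, rfl⟩

end Stmt18Aux

/-- The intersection of a field of neighborhoods with a field of cross sections is a
field of cross sections. -/
theorem stmt18 {X : Type u} [MetricSpace X] [CompactSpace X] (φ : ℝ → X → X)
    (hφ : IsRegularFlow φ) (N H : X → Set X) (hN : IsFieldOfNbhds N)
    (hH : IsCrossSectionField φ H) :
    IsCrossSectionField φ (fun x => N x ∩ H x) := by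
  obtain ⟨⟨hφc, hφ0, hφadd⟩, -⟩ := hφ
  obtain ⟨⟨hNcomp, hNmem, hNsemi⟩, r, hr, hrball⟩ := hN
  obtain ⟨⟨hHcomp, hHmem, hHsemi⟩, τ, hτ, ⟨⟨hFcomp, hFmem, hFsemi⟩, rH, hrH, hrHball⟩,
    huniq⟩ := hH
  -- The intersection field is a field of compact sets.
  have hGcomp : ∀ x : X, IsCompact (N x ∩ H x) :=
    fun x => (hNcomp x).inter_right (hHcomp x).isClosed
  have hGmem : ∀ x : X, x ∈ N x ∩ H x := fun x => ⟨hNmem x, hHmem x⟩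
  have hGsemi : ∀ x : X, ∀ ε > (0:ℝ), ∃ δ > (0:ℝ), ∀ y, dist x y < δ →
      N y ∩ H y ⊆ ballSet ε (N x ∩ H x) := by
    intro x
    refine stmt18_semicont_of_seq (h := fun x => N x ∩ H x) (hGcomp x).isClosed ?_
    intro y z l hy hz hzl
    exact ⟨stmt18_limit_mem (hNcomp x).isClosed (hNsemi x) hy (fun n => (hz n).1) hzl,
      stmt18_limit_mem (hHcomp x).isClosed (hHsemi x) hy (fun n => (hz n).2) hzl⟩
  refine ⟨⟨hGcomp, hGmem, hGsemi⟩, τ, hτ, ⟨⟨?_, ?_, ?_⟩, ?_⟩, ?_⟩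
  · -- compact values of the flow saturation
    intro x
    rw [stmt18_flowSat_eq_image]
    exact ((isCompact_Icc.prod (hGcomp x)).image hφc)
  · -- the base point belongs
    intro x
    exact ⟨0, ⟨by linarith, by linarith⟩, x, hGmem x, (hφ0 x).symm⟩
  · -- semicontinuity of the flow saturation
    intro x
    have hcomp : IsCompact (flowSat φ (Icc (-τ) τ) (fun x => N x ∩ H x) x) := by
      rw [stmt18_flowSat_eq_image]
      exact ((isCompact_Icc.prod (hGcomp x)).image hφc)
    refine stmt18_semicont_of_seq hcomp.isClosed ?_
    intro y z l hy hz hzl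
    choose t ht w hw hzw using hz
    obtain ⟨⟨t0, w0⟩, ⟨ht0, -⟩, σ, hσ, hlim⟩ :=
      (isCompact_Icc.prod isCompact_univ).tendsto_subseq
        (fun n => Set.mk_mem_prod (ht n) (mem_univ (w n)))
    have htl : Tendsto (fun n => t (σ n)) atTop (𝓝 t0) := (continuous_fst.tendsto _).comp hlim
    have hwl : Tendsto (fun n => w (σ n)) atTop (𝓝 w0) := (continuous_snd.tendsto _).comp hlim
    have hw0 : w0 ∈ N x ∩ H x :=
      ⟨stmt18_limit_mem (hNcomp x).isClosed (hNsemi x) (hy.comp hσ.tendsto_atTop)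
          (fun n => (hw (σ n)).1) hwl,
        stmt18_limit_mem (hHcomp x).isClosed (hHsemi x) (hy.comp hσ.tendsto_atTop)
          (fun n => (hw (σ n)).2) hwl⟩
    have hφlim : Tendsto (fun n => φ (t (σ n)) (w (σ n))) atTop (𝓝 (φ t0 w0)) :=
      (hφc.tendsto (t0, w0)).comp (htl.prodMk_nhds hwl)
    have hl : l = φ t0 w0 :=
      tendsto_nhds_unique ((hzl.comp hσ.tendsto_atTop).congr (fun n => hzw (σ n))) hφlim
    exact ⟨t0, ht0, w0, hw0, hl⟩
  · -- the flow saturation is uniformly a neighborhood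
    by_contra hcon
    push_neg at hcon
    have H1 : ∀ n : ℕ, ∃ a z : X, dist z a ≤ min (1/((n:ℝ)+1)) rH ∧
        z ∉ flowSat φ (Icc (-τ) τ) (fun x => N x ∩ H x) a := by
      intro n
      obtain ⟨a, hns⟩ := hcon (min (1/((n:ℝ)+1)) rH) (lt_min (by positivity) hrH)
      obtain ⟨z, hz1, hz2⟩ := Set.not_subset.1 hns
      exact ⟨a, z, Metric.mem_closedBall.1 hz1, hz2⟩
    choose a z hdist hnot using H1
    have hzF : ∀ n, ∃ t ∈ Icc (-τ) τ, ∃ y ∈ H (a n), z n = φ t y := by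
      intro n
      exact hrHball (a n) (Metric.mem_closedBall.2 ((hdist n).trans (min_le_right _ _)))
    choose t ht y hy hzeq using hzF
    obtain ⟨⟨⟨x0, t0⟩, y0⟩, ⟨⟨-, ht0⟩, -⟩, σ, hσ, hlim⟩ :=
      ((isCompact_univ.prod isCompact_Icc).prod isCompact_univ).tendsto_subseq
        (x := fun n => ((a n, t n), y n))
        (fun n => Set.mk_mem_prod (Set.mk_mem_prod (mem_univ (a n)) (ht n)) (mem_univ (y n)))
    have hal : Tendsto (fun n => a (σ n)) atTop (𝓝 x0) :=
      ((continuous_fst.comp continuous_fst).tendsto _).comp hlim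
    have htl : Tendsto (fun n => t (σ n)) atTop (𝓝 t0) :=
      ((continuous_snd.comp continuous_fst).tendsto _).comp hlim
    have hyl : Tendsto (fun n => y (σ n)) atTop (𝓝 y0) :=
      (continuous_snd.tendsto _).comp hlim
    -- the centers and the selected points converge to the same limit
    have hdz : Tendsto (fun n => dist (z (σ n)) (a (σ n))) atTop (𝓝 0) := by
      have hb : ∀ n : ℕ, dist (z (σ n)) (a (σ n)) ≤ 1 / (n + 1) := by
        intro n
        refine ((hdist (σ n)).trans (min_le_left _ _)).trans ?_
        apply one_div_le_one_div_of_le (by positivity)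
        have : (n : ℝ) ≤ σ n := by exact_mod_cast hσ.le_apply
        linarith
      refine squeeze_zero (fun n => dist_nonneg) hb ?_
      exact tendsto_one_div_add_atTop_nhds_zero_nat
    have hzl : Tendsto (fun n => z (σ n)) atTop (𝓝 x0) := by
      rw [tendsto_iff_dist_tendsto_zero]
      refine squeeze_zero (fun n => dist_nonneg)
        (fun n => dist_triangle (z (σ n)) (a (σ n)) x0) ?_
      have : Tendsto (fun n => dist (a (σ n)) x0) atTop (𝓝 0) :=
        tendsto_iff_dist_tendsto_zero.1 hal
      simpa using hdz.add this
    have hy0 : y0 ∈ H x0 :=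
      stmt18_limit_mem (hHcomp x0).isClosed (hHsemi x0) hal (fun n => hy (σ n)) hyl
    have hφeq : φ t0 y0 = x0 := by
      have hφlim : Tendsto (fun n => φ (t (σ n)) (y (σ n))) atTop (𝓝 (φ t0 y0)) :=
        (hφc.tendsto (t0, y0)).comp (htl.prodMk_nhds hyl)
      exact tendsto_nhds_unique (hzl.congr (fun n => hzeq (σ n))) hφlim |>.symm
    -- by the cross section property, `y0 = x0`
    have hx0y0 : x0 = y0 := by
      have hmem : x0 ∈ H x0 ∩ {w | ∃ s : ℝ, |s| ≤ τ ∧ w = φ s y0} :=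
        ⟨hHmem x0, t0, abs_le.2 ⟨ht0.1, ht0.2⟩, hφeq.symm⟩
      rw [huniq x0 y0 hy0] at hmem
      exact hmem
    -- eventually `y (σ n) ∈ N (a (σ n))`, a contradiction
    have hda : Tendsto (fun n => dist (a (σ n)) (y (σ n))) atTop (𝓝 0) := by
      have h1 : Tendsto (fun n => dist (a (σ n)) x0) atTop (𝓝 0) :=
        tendsto_iff_dist_tendsto_zero.1 hal
      have h2 : Tendsto (fun n => dist (y (σ n)) x0) atTop (𝓝 0) := by
        rw [hx0y0]
        exact tendsto_iff_dist_tendsto_zero.1 hyl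
      refine squeeze_zero (fun n => dist_nonneg) (fun n => ?_) (by simpa using h1.add h2)
      calc dist (a (σ n)) (y (σ n)) ≤ dist (a (σ n)) x0 + dist x0 (y (σ n)) :=
            dist_triangle _ _ _
        _ = dist (a (σ n)) x0 + dist (y (σ n)) x0 := by rw [dist_comm x0]
    obtain ⟨n, hn⟩ := ((Metric.tendsto_nhds.1 hda) r hr).exists
    have hyN : y (σ n) ∈ N (a (σ n)) := by
      apply hrball (a (σ n))
      rw [Metric.mem_closedBall, dist_comm]
      simpa using hn.le
    exact hnot (σ n) ⟨t (σ n), ht (σ n), y (σ n), ⟨hyN, hy (σ n)⟩, hzeq (σ n)⟩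
  · -- the uniqueness property of cross sections
    intro x yy hyy
    apply Subset.antisymm
    · intro u hu
      have h := huniq x yy hyy.2
      rw [← h]
      exact ⟨hu.1.2, hu.2⟩
    · intro u hu
      rw [mem_singleton_iff] at hu
      subst hu
      exact ⟨hyy, ⟨0, by simpa using le_of_lt hτ, (hφ0 u).symm⟩⟩
end

section
/- Let φ be a regular flow on a compact metric space X, let N be a field of neighborhoods, and let ω be a 1-form on U(N) such that the flow derivative ω̇_x(y) exists for all (x,y) ∈ U(N), is continuous on U(N), and vanishes nowhere. Then there is ρ₁ > 0 such that for every ρ ∈ (0,ρ₁) the field H_ρ defined by H_ρ(x) = B_ρ(x) ∩ ker(ω)(x) is a field of cross sections. -/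
open Set Metric Filter Topology

universe u

section helpers

variable {X : Type u} [MetricSpace X]

lemma aux_usc_of_closedGraph [CompactSpace X] (G : Set (X × X)) (hG : IsClosed G) (x : X) :
    ∀ ε > (0:ℝ), ∃ δ > (0:ℝ), ∀ y, dist x y < δ →
      {z | (y, z) ∈ G} ⊆ ballSet ε {z | (x, z) ∈ G} := by
  intro ε hε
  by_contra hc
  push_neg at hc
  have h1 : ∀ n : ℕ, ∃ y z, dist x y < 1/(n+1) ∧ (y, z) ∈ G ∧
      z ∉ ballSet ε {z | (x, z) ∈ G} := by
    intro n
    obtain ⟨y, hy, hsub⟩ := hc (1/(n+1)) (by positivity)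
    obtain ⟨z, hz, hz'⟩ := not_subset.mp hsub
    exact ⟨y, z, hy, hz, hz'⟩
  choose y z hy hz hnz using h1
  have hyx : Tendsto y atTop (𝓝 x) := by
    rw [tendsto_iff_dist_tendsto_zero]
    apply squeeze_zero (fun n => dist_nonneg) (fun n => (dist_comm (y n) x ▸ (hy n).le))
    exact tendsto_one_div_add_atTop_nhds_zero_nat
  obtain ⟨L, -, ψ, hψ, hzL⟩ := IsCompact.tendsto_subseq (x := z) isCompact_univ
    (fun n => mem_univ _)
  have hLG : (x, L) ∈ G := by
    apply hG.mem_of_tendsto ((hyx.comp hψ.tendsto_atTop).prodMk_nhds hzL)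
    exact Eventually.of_forall (fun n => hz (ψ n))
  have hgt : ∀ n, ε < dist (z (ψ n)) L := by
    intro n
    by_contra hle
    push_neg at hle
    exact hnz (ψ n) (mem_biUnion hLG (mem_closedBall.mpr hle))
  have hd : Tendsto (fun n => dist (z (ψ n)) L) atTop (𝓝 0) := by
    simpa using hzL.dist (tendsto_const_nhds (x := L))
  obtain ⟨n, hn⟩ := (hd.eventually (eventually_lt_nhds hε)).exists
  exact absurd (hgt n) (not_lt.mpr hn.le)

lemma aux_flow_small [CompactSpace X] (φ : ℝ → X → X)
    (hc : Continuous fun p : ℝ × X => φ p.1 p.2) (h0 : ∀ x, φ 0 x = x) :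
    ∀ e > (0:ℝ), ∃ τ > (0:ℝ), ∀ t : ℝ, |t| ≤ τ → ∀ z, dist (φ t z) z ≤ e := by
  intro e he
  by_contra hcon
  push_neg at hcon
  have h1 : ∀ n : ℕ, ∃ t : ℝ, ∃ z : X, |t| ≤ 1/((n:ℝ)+1) ∧ e < dist (φ t z) z := by
    intro n
    obtain ⟨t, ht, z, hz⟩ := hcon (1/(n+1)) (by positivity)
    exact ⟨t, z, ht, hz⟩
  choose t z ht hz using h1
  have htt : Tendsto t atTop (𝓝 0) := by
    rw [tendsto_iff_dist_tendsto_zero]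
    apply squeeze_zero (fun n => dist_nonneg)
      (fun n => by simpa [Real.dist_eq] using ht n)
    simpa [one_div] using tendsto_one_div_add_atTop_nhds_zero_nat (𝕜 := ℝ)
  obtain ⟨L, -, ψ, hψ, hzL⟩ := IsCompact.tendsto_subseq (x := z) isCompact_univ
    (fun n => mem_univ _)
  have hφt : Tendsto (fun n => φ (t (ψ n)) (z (ψ n))) atTop (𝓝 L) := by
    have := (hc.tendsto (0, L)).comp (((htt.comp hψ.tendsto_atTop)).prodMk_nhds hzL)
    simpa [h0, Function.comp_def] using this
  have hd : Tendsto (fun n => dist (φ (t (ψ n)) (z (ψ n))) (z (ψ n))) atTop (𝓝 0) := by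
    simpa using hφt.dist hzL
  obtain ⟨n, hn⟩ := (hd.eventually (eventually_lt_nhds he)).exists
  exact absurd (hz (ψ n)) (not_lt.mpr hn.le)

lemma aux_UN_closed (N : X → Set X) (hcomp : ∀ x, IsCompact (N x)) (hmem : ∀ x, x ∈ N x)
    (hsemi : ∀ x : X, ∀ ε > (0:ℝ), ∃ δ > (0:ℝ), ∀ y, dist x y < δ → N y ⊆ ballSet ε (N x)) :
    IsClosed {p : X × X | p.2 ∈ N p.1} := by
  rw [← isOpen_compl_iff, Metric.isOpen_iff]
  rintro ⟨x, w⟩ hp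
  simp only [mem_compl_iff, mem_setOf_eq] at hp
  have hne : (N x).Nonempty := ⟨x, hmem x⟩
  have he : 0 < infDist w (N x) :=
    (IsClosed.notMem_iff_infDist_pos (hcomp x).isClosed hne).mp hp
  set e := infDist w (N x) with he_def
  obtain ⟨δ, hδ, hδ'⟩ := hsemi x (e/3) (by linarith)
  refine ⟨min δ (e/3), by positivity, ?_⟩
  rintro ⟨y, v⟩ hq
  simp only [mem_ball, Prod.dist_eq, max_lt_iff, lt_min_iff] at hq
  simp only [mem_compl_iff, mem_setOf_eq]
  intro hv
  obtain ⟨u, hu, hu'⟩ := mem_iUnion₂.mp (hδ' y (by rw [dist_comm]; exact hq.1.1) hv)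
  rw [mem_closedBall] at hu'
  have h1 : infDist w (N x) ≤ dist w u := infDist_le_dist_of_mem hu
  have h2 : dist w u ≤ dist w v + dist v u := dist_triangle _ _ _
  have h3 : dist w v < e/3 := by rw [dist_comm]; exact hq.2.2
  linarith

lemma aux_deriv_helper {g D : ℝ → ℝ} {τ c : ℝ} (hτ : 0 < τ) (hc : 0 < c)
    (hg : ∀ s ∈ Icc (-τ) τ, HasDerivAt g (D s) s)
    (hD : ∀ s ∈ Icc (-τ) τ, c ≤ D s) :
    InjOn g (Icc (-τ) τ) ∧ (|g 0| ≤ c * τ → ∃ t ∈ Icc (-τ) τ, g t = 0) := by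
  have hmem0 : (0:ℝ) ∈ Icc (-τ) τ := ⟨neg_nonpos.mpr hτ.le, hτ.le⟩
  have hcont : ContinuousOn g (Icc (-τ) τ) :=
    fun s hs => (hg s hs).continuousAt.continuousWithinAt
  have hsm : StrictMonoOn g (Icc (-τ) τ) := by
    apply strictMonoOn_of_deriv_pos (convex_Icc _ _) hcont
    intro s hs
    rw [interior_Icc] at hs
    have hs' := Ioo_subset_Icc_self hs
    rw [(hg s hs').deriv]
    exact hc.trans_le (hD s hs')
  refine ⟨hsm.injOn, fun hg0 => ?_⟩
  have hg2 : MonotoneOn (fun s => g s - c * s) (Icc (-τ) τ) := by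
    apply monotoneOn_of_deriv_nonneg (convex_Icc _ _)
      (hcont.sub (continuousOn_const.mul continuousOn_id))
    · intro s hs
      rw [interior_Icc] at hs
      exact ((hg s (Ioo_subset_Icc_self hs)).sub
        ((hasDerivAt_id s).const_mul c)).differentiableAt.differentiableWithinAt
    · intro s hs
      rw [interior_Icc] at hs
      have hs' := Ioo_subset_Icc_self hs
      rw [show (g - (fun x => c) * id) = (g - fun y => c * id y) from rfl,
        ((hg s hs').sub ((hasDerivAt_id s).const_mul c)).deriv]
      simp only [mul_one]
      linarith [hD s hs']
  have h1 : g (-τ) ≤ 0 := by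
    have := hg2 ⟨le_refl _, by linarith⟩ hmem0 (by linarith)
    have h2 := (abs_le.mp hg0).2
    simp only at this
    linarith
  have h2 : 0 ≤ g τ := by
    have := hg2 hmem0 ⟨by linarith, le_refl _⟩ hτ.le
    have h3 := (abs_le.mp hg0).1
    simp only at this
    linarith
  obtain ⟨t, ht, hgt⟩ := intermediate_value_Icc (by linarith : -τ ≤ τ) hcont ⟨h1, h2⟩
  exact ⟨t, ht, hgt⟩

lemma aux_hasDeriv (φ : ℝ → X → X) (hadd : ∀ (s t : ℝ) (x : X), φ (s + t) x = φ s (φ t x))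
    (N : X → Set X) (ω dω : X → X → ℝ)
    (hder : ∀ x y : X, y ∈ N x →
      Filter.Tendsto (fun t : ℝ => (ω x (φ t y) - ω x y) / t) (𝓝[≠] 0) (𝓝 (dω x y)))
    (x z : X) (s : ℝ) (hs : φ s z ∈ N x) :
    HasDerivAt (fun u => ω x (φ u z)) (dω x (φ s z)) s := by
  rw [hasDerivAt_iff_tendsto_slope]
  have hsub : Tendsto (fun u : ℝ => u - s) (𝓝[≠] s) (𝓝[≠] 0) := by
    rw [tendsto_nhdsWithin_iff]
    constructor
    · have : Tendsto (fun u : ℝ => u - s) (𝓝 s) (𝓝 (s - s)) :=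
        (continuous_id.sub continuous_const).tendsto s
      simpa using this.mono_left nhdsWithin_le_nhds
    · filter_upwards [self_mem_nhdsWithin] with u hu
      exact sub_ne_zero.mpr hu
  have hkey := (hder x (φ s z) hs).comp hsub
  have heq : (fun t : ℝ => (ω x (φ t (φ s z)) - ω x (φ s z)) / t) ∘ (fun u => u - s)
      = slope (fun u => ω x (φ u z)) s := by
    funext u
    simp only [Function.comp_apply, slope_def_field]
    rw [← hadd (u - s) s z, sub_add_cancel]
  rw [heq] at hkey
  exact hkey

end helpers

/-- If `ω` is a 1-form on `U(N)` whose flow derivative exists, is continuous and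
vanishes nowhere, then `H_ρ(x) = B_ρ(x) ∩ ker(ω)(x)` is a field of cross sections
for all small `ρ > 0`. -/
theorem stmt19 {X : Type u} [MetricSpace X] [CompactSpace X] (φ : ℝ → X → X)
    (hφ : IsRegularFlow φ) (N : X → Set X) (hN : IsFieldOfNbhds N) (ω : X → X → ℝ)
    (hωcont : ContinuousOn (fun p : X × X => ω p.1 p.2) {p : X × X | p.2 ∈ N p.1})
    (hω0 : ∀ x : X, ω x x = 0) (dω : X → X → ℝ)
    (hder : ∀ x y : X, y ∈ N x →
      Tendsto (fun t : ℝ => (ω x (φ t y) - ω x y) / t) (𝓝[≠] 0) (𝓝 (dω x y)))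
    (hdcont : ContinuousOn (fun p : X × X => dω p.1 p.2) {p : X × X | p.2 ∈ N p.1})
    (hdne : ∀ x y : X, y ∈ N x → dω x y ≠ 0) :
    ∃ ρ₁ > (0 : ℝ), ∀ ρ ∈ Ioo (0 : ℝ) ρ₁,
      IsCrossSectionField φ (fun x => closedBall x ρ ∩ {y ∈ N x | ω x y = 0}) := by
  obtain ⟨⟨hφc, hφ0, hφadd⟩, -⟩ := hφ
  obtain ⟨⟨hNcomp, hNmem, hNsemi⟩, r, hr, hrN⟩ := hN
  rcases isEmpty_or_nonempty X with hX | hX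
  · refine ⟨1, one_pos, fun ρ hρ => ?_⟩
    exact ⟨⟨fun x => isEmptyElim x, fun x => isEmptyElim x, fun x => isEmptyElim x⟩,
      1, one_pos,
      ⟨⟨fun x => isEmptyElim x, fun x => isEmptyElim x, fun x => isEmptyElim x⟩,
        1, one_pos, fun x => isEmptyElim x⟩,
      fun x => isEmptyElim x⟩
  set U := {p : X × X | p.2 ∈ N p.1} with hUdef
  have hUclosed : IsClosed U := aux_UN_closed N hNcomp hNmem hNsemi
  have hUcomp : IsCompact U := hUclosed.isCompact
  obtain ⟨x₀⟩ := hX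
  have hUne : U.Nonempty := ⟨(x₀, x₀), hNmem x₀⟩
  obtain ⟨p₀, hp₀U, hp₀⟩ := hUcomp.exists_isMinOn hUne
    (hdcont.abs : ContinuousOn (fun p : X × X => |dω p.1 p.2|) U)
  set m := |dω p₀.1 p₀.2| with hmdef
  have hm : 0 < m := abs_pos.mpr (hdne _ _ hp₀U)
  have hmlb : ∀ p ∈ U, m ≤ |dω p.1 p.2| := fun p hp => isMinOn_iff.mp hp₀ p hp
  obtain ⟨δ₁, hδ₁, hδ₁'⟩ := Metric.uniformContinuousOn_iff.mp
    (hUcomp.uniformContinuousOn_of_continuous hdcont) (m/2) (by linarith)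
  have hωuc := Metric.uniformContinuousOn_iff.mp
    (hUcomp.uniformContinuousOn_of_continuous hωcont)
  obtain ⟨τ₀, hτ₀, hτ₀'⟩ := aux_flow_small φ hφc hφ0 (min (r/2) (δ₁/2)) (by positivity)
  refine ⟨r/2, by linarith, ?_⟩
  rintro ρ ⟨hρ0, hρr⟩
  obtain ⟨τ₂, hτ₂, hτ₂'⟩ := aux_flow_small φ hφc hφ0 (ρ/2) (by linarith)
  set τ := min τ₀ τ₂ with hτdef
  have hτ : 0 < τ := lt_min hτ₀ hτ₂
  obtain ⟨δω, hδω, hδω'⟩ := hωuc ((m/2)*τ) (by positivity)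
  -- basic flow displacement bounds
  have hflow1 : ∀ s : ℝ, |s| ≤ τ → ∀ z, dist (φ s z) z ≤ r/2 :=
    fun s hs z => le_trans (hτ₀' s (le_trans hs (min_le_left _ _)) z) (min_le_left _ _)
  have hflow2 : ∀ s : ℝ, |s| ≤ τ → ∀ z, dist (φ s z) z ≤ δ₁/2 :=
    fun s hs z => le_trans (hτ₀' s (le_trans hs (min_le_left _ _)) z) (min_le_right _ _)
  have hflow3 : ∀ s : ℝ, |s| ≤ τ → ∀ z, dist (φ s z) z ≤ ρ/2 :=
    fun s hs z => hτ₂' s (le_trans hs (min_le_right _ _)) z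
  have hmemN : ∀ x z : X, dist x z ≤ r/2 → ∀ s : ℝ, |s| ≤ τ → φ s z ∈ N x := by
    intro x z hxz s hs
    apply hrN x
    rw [mem_closedBall, dist_comm]
    calc dist x (φ s z) ≤ dist x z + dist z (φ s z) := dist_triangle _ _ _
      _ ≤ r/2 + r/2 := by
          have := hflow1 s hs z
          rw [dist_comm] at this
          linarith
      _ = r := by ring
  have hzUmem : ∀ x z : X, dist x z ≤ r/2 → (x, z) ∈ U := by
    intro x z hxz
    have := hmemN x z hxz 0 (by simp [hτ.le])
    rwa [hφ0] at this
  -- the main analytic lemma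
  have main : ∀ x z : X, dist x z ≤ r/2 →
      (∀ t ∈ Icc (-τ) τ, ∀ t' ∈ Icc (-τ) τ, ω x (φ t z) = ω x (φ t' z) → t = t') ∧
      (|ω x z| ≤ (m/2) * τ → ∃ t : ℝ, |t| ≤ τ ∧ ω x (φ t z) = 0) := by
    intro x z hxz
    have habs : ∀ s ∈ Icc (-τ) τ, |s| ≤ τ := fun s hs => abs_le.mpr hs
    have hmm : ∀ s ∈ Icc (-τ) τ, φ s z ∈ N x := fun s hs => hmemN x z hxz s (habs s hs)
    have hgD : ∀ s ∈ Icc (-τ) τ,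
        HasDerivAt (fun u => ω x (φ u z)) (dω x (φ s z)) s :=
      fun s hs => aux_hasDeriv φ hφadd N ω dω hder x z s (hmm s hs)
    have hzU : (x, z) ∈ U := hzUmem x z hxz
    have hsign : ∀ s ∈ Icc (-τ) τ, |dω x (φ s z) - dω x z| < m/2 := by
      intro s hs
      have h1 : (x, φ s z) ∈ U := hmm s hs
      have h2 := hδ₁' (x, φ s z) h1 (x, z) hzU ?_
      · rwa [Real.dist_eq] at h2
      · rw [Prod.dist_eq]
        simp only [dist_self]
        rw [max_eq_right dist_nonneg]
        linarith [hflow2 s (habs s hs) z]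
    have hg0eq : ω x (φ 0 z) = ω x z := by rw [hφ0]
    have hmz : m ≤ |dω x z| := hmlb (x, z) hzU
    rcases lt_or_gt_of_ne (hdne x z hzU) with hneg | hpos
    · -- dω x z < 0
      have hmz' : dω x z ≤ -m := by
        rcases abs_le.mp (le_refl |dω x z|) with _
        rcases abs_cases (dω x z) with ⟨h, _⟩ | ⟨h, _⟩ <;> linarith
      have hDlb : ∀ s ∈ Icc (-τ) τ, m/2 ≤ -(dω x (φ s z)) := by
        intro s hs
        have := abs_lt.mp (hsign s hs)
        linarith [this.2]
      obtain ⟨hinj, hex⟩ := aux_deriv_helper hτ (by linarith : (0:ℝ) < m/2)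
        (fun s hs => (hgD s hs).neg) hDlb
      constructor
      · intro t ht t' ht' heq
        exact hinj ht ht' (by simp only [Pi.neg_apply, heq])
      · intro hsmall
        obtain ⟨t, ht, hgt⟩ := hex (by simp only [Pi.neg_apply]; rw [abs_neg]; simpa [hφ0] using hsmall)
        exact ⟨t, habs t ht, neg_eq_zero.mp hgt⟩
    · -- dω x z > 0
      have hmz' : m ≤ dω x z := by
        rcases abs_cases (dω x z) with ⟨h, _⟩ | ⟨h, _⟩ <;> linarith
      have hDlb : ∀ s ∈ Icc (-τ) τ, m/2 ≤ dω x (φ s z) := by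
        intro s hs
        have := abs_lt.mp (hsign s hs)
        linarith [this.1]
      obtain ⟨hinj, hex⟩ := aux_deriv_helper hτ (by linarith : (0:ℝ) < m/2) hgD hDlb
      constructor
      · intro t ht t' ht' heq
        exact hinj ht ht' heq
      · intro hsmall
        obtain ⟨t, ht, hgt⟩ := hex (by simpa [hφ0] using hsmall)
        exact ⟨t, habs t ht, hgt⟩
  -- the field H
  set H : X → Set X := fun x => closedBall x ρ ∩ {y ∈ N x | ω x y = 0} with hHdef
  have hHgraph : {p : X × X | p.2 ∈ H p.1}
      = {p : X × X | dist p.1 p.2 ≤ ρ} ∩ (U ∩ (fun p : X × X => ω p.1 p.2) ⁻¹' {0}) := by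
    ext ⟨x, z⟩
    simp only [hHdef, mem_setOf_eq, mem_inter_iff, mem_closedBall, mem_preimage,
      mem_singleton_iff, mem_sep_iff, hUdef]
    try rw [dist_comm]
    try tauto
  have hGclosed : IsClosed {p : X × X | p.2 ∈ H p.1} := by
    rw [hHgraph]
    exact (isClosed_le (by fun_prop) continuous_const).inter
      (hωcont.preimage_isClosed_of_isClosed hUclosed isClosed_singleton)
  have hHcomp : ∀ x, IsCompact (H x) := by
    intro x
    have heq : H x = (fun z => (x, z)) ⁻¹' {p : X × X | p.2 ∈ H p.1} := by
      ext z; simp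
    rw [heq]
    exact (hGclosed.preimage (Continuous.prodMk_right x)).isCompact
  have hHmem : ∀ x, x ∈ H x := fun x => ⟨mem_closedBall_self hρ0.le, hNmem x, hω0 x⟩
  have hHsemi : ∀ x : X, ∀ ε > (0:ℝ), ∃ δ > (0:ℝ), ∀ y, dist x y < δ →
      H y ⊆ ballSet ε (H x) := by
    intro x ε hε
    obtain ⟨δ, hδ, hδ'⟩ := aux_usc_of_closedGraph _ hGclosed x ε hε
    exact ⟨δ, hδ, fun y hy => hδ' y hy⟩
  refine ⟨⟨hHcomp, hHmem, hHsemi⟩, τ, hτ, ?_, ?_⟩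
  · -- field of neighborhoods
    set F := flowSat φ (Icc (-τ) τ) H with hFdef
    have hFeq : ∀ x, F x = (fun q : ℝ × X => φ q.1 q.2) '' (Icc (-τ) τ ×ˢ H x) := by
      intro x
      ext z
      simp only [hFdef, flowSat, mem_setOf_eq, mem_image, mem_prod, Prod.exists]
      constructor
      · rintro ⟨t, ht, y, hy, rfl⟩; exact ⟨t, y, ⟨ht, hy⟩, rfl⟩
      · rintro ⟨t, y, ⟨ht, hy⟩, rfl⟩; exact ⟨t, ht, y, hy, rfl⟩
    have hFGeq : {p : X × X | p.2 ∈ F p.1}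
        = (fun q : ℝ × (X × X) => (q.2.1, φ q.1 q.2.2)) ''
            (Icc (-τ) τ ×ˢ {p : X × X | p.2 ∈ H p.1}) := by
      ext ⟨x, z⟩
      simp only [hFdef, flowSat, mem_setOf_eq, mem_image, mem_prod, Prod.exists]
      constructor
      · rintro ⟨t, ht, y, hy, rfl⟩; exact ⟨t, x, y, ⟨ht, hy⟩, rfl⟩
      · rintro ⟨t, a, y, ⟨ht, hy⟩, heq⟩
        injection heq with h1 h2
        subst h1
        subst h2
        exact ⟨t, ht, y, hy, rfl⟩
    have hFGclosed : IsClosed {p : X × X | p.2 ∈ F p.1} := by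
      rw [hFGeq]
      apply IsCompact.isClosed
      apply IsCompact.image (isCompact_Icc.prod hGclosed.isCompact)
      exact (continuous_snd.fst).prodMk
        (hφc.comp (continuous_fst.prodMk continuous_snd.snd))
    refine ⟨⟨?_, ?_, ?_⟩, ?_⟩
    · intro x
      rw [hFeq]
      exact (isCompact_Icc.prod (hHcomp x)).image hφc
    · intro x
      exact ⟨0, ⟨neg_nonpos.mpr hτ.le, hτ.le⟩, x, hHmem x, (hφ0 x).symm⟩
    · intro x ε hε
      obtain ⟨δ, hδ, hδ'⟩ := aux_usc_of_closedGraph _ hFGclosed x ε hε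
      exact ⟨δ, hδ, fun y hy => hδ' y hy⟩
    · -- B_{r'} ⊆ F x
      refine ⟨min (ρ/2) (min (δω/2) (r/2)), by positivity, ?_⟩
      intro x z hz
      rw [mem_closedBall] at hz
      have hzρ : dist z x ≤ ρ/2 := le_trans hz (min_le_left _ _)
      have hzδ : dist z x ≤ δω/2 := le_trans hz (le_trans (min_le_right _ _) (min_le_left _ _))
      have hzr : dist z x ≤ r/2 := le_trans hz (le_trans (min_le_right _ _) (min_le_right _ _))
      have hxz : dist x z ≤ r/2 := by rwa [dist_comm]
      have hωsmall : |ω x z| ≤ (m/2) * τ := by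
        have h1 : (x, z) ∈ U := hzUmem x z hxz
        have h2 : (x, x) ∈ U := hNmem x
        have h3 := hδω' (x, z) h1 (x, x) h2 ?_
        · rw [hω0, Real.dist_eq, sub_zero] at h3
          exact h3.le
        · rw [Prod.dist_eq]
          simp only [dist_self]
          calc max (0:ℝ) (dist z x) = dist z x := max_eq_right dist_nonneg
            _ ≤ δω/2 := hzδ
            _ < δω := by linarith
      obtain ⟨t, ht, hgt⟩ := (main x z hxz).2 hωsmall
      refine ⟨-t, ⟨?_, ?_⟩, φ t z, ⟨?_, hmemN x z hxz t ht, hgt⟩, ?_⟩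
      · have := (abs_le.mp ht).2; linarith
      · have := (abs_le.mp ht).1; linarith
      · rw [mem_closedBall]
        calc dist (φ t z) x ≤ dist (φ t z) z + dist z x := dist_triangle _ _ _
          _ ≤ ρ/2 + ρ/2 := add_le_add (hflow3 t ht z) hzρ
          _ = ρ := by ring
      · rw [← hφadd, neg_add_cancel, hφ0]
  · -- uniqueness
    intro x y hy
    obtain ⟨hyball, hyN, hyω⟩ := hy
    rw [mem_closedBall] at hyball
    have hxy : dist x y ≤ r/2 := by rw [dist_comm]; linarith
    ext z
    simp only [mem_inter_iff, mem_setOf_eq, mem_singleton_iff]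
    constructor
    · rintro ⟨⟨hzball, hzN, hzω⟩, t, ht, rfl⟩
      have h0 : ω x (φ t y) = ω x (φ 0 y) := by rw [hφ0, hzω, hyω]
      have := (main x y hxy).1 t (abs_le.mp ht) 0 ⟨neg_nonpos.mpr hτ.le, hτ.le⟩ h0
      rw [this, hφ0]
    · rintro rfl
      exact ⟨⟨mem_closedBall.mpr hyball, hyN, hyω⟩, 0, by simp [hτ.le], (hφ0 _).symm⟩
end
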